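/- Automatic Baire property: Let Σ be a nonempty finite alphabet and let L = L(𝒜) ⊆ Σ^ω be accepted by a nondeterministic Büchi automaton 𝒜 with finite state set. Then there exist nondeterministic Büchi automata ℬ and 𝒞 with finite state sets such that L(ℬ) is an open subset of Σ^ω, L(𝒞) is a countable union of closed sets with empty interior (hence a meager Fσ set), and L(𝒜) Δ L(ℬ) ⊆ L(𝒞). -/

import Mathlib

/-- The ω-language accepted by the nondeterministic Büchi automaton `(K, δ, q₀, F)`. -/
def nbaLang {α K : Type*} (δ : K → α → Set K) (q₀ : K) (F : Set K) : Set (ℕ → α) :=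
  {x | ∃ r : ℕ → K, r 0 = q₀ ∧ (∀ n, r (n + 1) ∈ δ (r n) (x n)) ∧
    {n : ℕ | r n ∈ F}.Infinite}

open Classical

namespace ABP

variable {α : Type*} {K : Type*}

/-! ### Basic definitions: MH-sets and their evolution -/

/-- One step of the Miyano–Hayashi style flagged subset construction. -/
def mhStep (δ : K → α → Set K) (F : Set K) (S : Set (K × Bool)) (a : α) : Set (K × Bool) :=
  {p | ∃ s ∈ S, p.1 ∈ δ s.1 a ∧ (p.2 = true ↔ (s.2 = true ∨ p.1 ∈ F))}

/-- Evolution of an MH-set along a finite word. -/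
def wordAct (δ : K → α → Set K) (F : Set K) (S : Set (K × Bool)) (w : List α) :
    Set (K × Bool) :=
  w.foldl (mhStep δ F) S

/-- The flag-free lift of a set of states. -/
def base (A : Set K) : Set (K × Bool) := {p | p.1 ∈ A ∧ p.2 = false}

/-- States reached with a true flag. -/
def succs (S : Set (K × Bool)) : Set K := {q | (q, true) ∈ S}

/-- All states occurring in an MH-set. -/
def supp (S : Set (K × Bool)) : Set K := {q | ∃ b, (q, b) ∈ S}

/-- The segment of `x` from position `t` (inclusive) to `m` (exclusive). -/
def seg (x : ℕ → α) (t m : ℕ) : List α := (List.range' t (m - t)).map x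

@[simp] lemma seg_self (x : ℕ → α) (t : ℕ) : seg x t t = [] := by simp [seg]

@[simp] lemma seg_length (x : ℕ → α) (t m : ℕ) : (seg x t m).length = m - t := by
  simp [seg]

lemma range'_snoc (t k : ℕ) : List.range' t (k+1) = List.range' t k ++ [t + k] := by
  have := List.range'_append (s := t) (m := k) (n := 1) (step := 1)
  simp at this
  exact this.symm

lemma seg_succ (x : ℕ → α) {t m : ℕ} (h : t ≤ m) :
    seg x t (m+1) = seg x t m ++ [x m] := by
  have h1 : m + 1 - t = (m - t) + 1 := by omega
  have h2 : t + (m - t) = m := by omega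
  simp [seg, h1, range'_snoc, h2]

lemma seg_append (x : ℕ → α) {t m n : ℕ} (h1 : t ≤ m) (h2 : m ≤ n) :
    seg x t m ++ seg x m n = seg x t n := by
  have := List.range'_append (s := t) (m := m - t) (n := n - m) (step := 1)
  simp only [one_mul] at this
  have h3 : t + (m - t) = m := by omega
  have h4 : m - t + (n - m) = n - t := by omega
  rw [h3, h4] at this
  simp [seg, ← List.map_append, this]

@[simp] lemma wordAct_nil (δ : K → α → Set K) (F : Set K) (S : Set (K × Bool)) :
    wordAct δ F S [] = S := rfl

lemma wordAct_append (δ : K → α → Set K) (F : Set K) (S : Set (K × Bool)) (u v : List α) :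
    wordAct δ F S (u ++ v) = wordAct δ F (wordAct δ F S u) v :=
  List.foldl_append

lemma wordAct_snoc (δ : K → α → Set K) (F : Set K) (S : Set (K × Bool)) (u : List α) (a : α) :
    wordAct δ F S (u ++ [a]) = mhStep δ F (wordAct δ F S u) a :=
  wordAct_append δ F S u [a]

@[simp] lemma mem_base {A : Set K} {p : K × Bool} : p ∈ base A ↔ p.1 ∈ A ∧ p.2 = false :=
  Iff.rfl

/-! ### Path semantics -/

/-- `p` is a run segment of the automaton on `x` between times `t` and `m`. -/
def IsSegRun (δ : K → α → Set K) (x : ℕ → α) (t m : ℕ) (p : ℕ → K) : Prop :=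
  ∀ i, t ≤ i → i < m → p (i+1) ∈ δ (p i) (x i)

lemma mem_mhStep {δ : K → α → Set K} {F : Set K} {S : Set (K × Bool)} {a : α}
    {q' : K} {b : Bool} :
    (q', b) ∈ mhStep δ F S a ↔
      ∃ q c, (q, c) ∈ S ∧ q' ∈ δ q a ∧ (b = true ↔ (c = true ∨ q' ∈ F)) := by
  constructor
  · rintro ⟨⟨q, c⟩, hs, h1, h2⟩; exact ⟨q, c, hs, h1, h2⟩
  · rintro ⟨q, c, hs, h1, h2⟩; exact ⟨⟨q, c⟩, hs, h1, h2⟩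

/-- Path semantics of the flagged subset construction. -/
lemma mem_wordAct_base_iff {δ : K → α → Set K} {F : Set K} (x : ℕ → α) {t m : ℕ}
    (h : t ≤ m) (A : Set K) (q' : K) (b : Bool) :
    (q', b) ∈ wordAct δ F (base A) (seg x t m) ↔
      ∃ p : ℕ → K, p t ∈ A ∧ p m = q' ∧ IsSegRun δ x t m p ∧
        (b = true ↔ ∃ τ, t < τ ∧ τ ≤ m ∧ p τ ∈ F) := by
  induction m, h using Nat.le_induction generalizing q' b with
  | base =>
      simp only [seg_self, wordAct_nil, mem_base]
      constructor
      · rintro ⟨h1, h2⟩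
        refine ⟨fun _ => q', h1, rfl, fun i h1 h2 => absurd (lt_of_le_of_lt h1 h2) (lt_irrefl _),
          ?_⟩
        subst h2
        simp only [Bool.false_eq_true, false_iff]
        rintro ⟨τ, h, h', _⟩; omega
      · rintro ⟨p, h1, h2, _, h4⟩
        subst h2
        refine ⟨h1, ?_⟩
        cases b with
        | false => rfl
        | true =>
            obtain ⟨τ, hτ1, hτ2, _⟩ := h4.1 rfl
            omega
  | succ m hm IH =>
      rw [seg_succ x hm, wordAct_snoc]
      rw [mem_mhStep]
      constructor
      · rintro ⟨q, c, hqc, hδ, hb⟩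
        obtain ⟨p, hp1, hp2, hp3, hp4⟩ := (IH q c).1 hqc
        refine ⟨fun i => if i ≤ m then p i else q', ?_, ?_, ?_, ?_⟩
        · simpa [hm] using hp1
        · simp
        · intro i h1 h2
          rcases Nat.lt_or_ge i m with h3 | h3
          · have e1 : i ≤ m := le_of_lt h3
            have e2 : i + 1 ≤ m := h3
            simpa [e1, e2] using hp3 i h1 h3
          · have : i = m := by omega
            subst this
            simpa [hp2] using hδ
        · rw [hb, hp4]
          constructor
          · rintro (⟨τ, h1, h2, h3⟩ | h1)
            · exact ⟨τ, h1, by omega, by simpa [h2] using h3⟩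
            · exact ⟨m + 1, by omega, le_refl _, by simpa using h1⟩
          · rintro ⟨τ, h1, h2, h3⟩
            rcases Nat.lt_or_ge m τ with h4 | h4
            · have : τ = m + 1 := by omega
              subst this
              right; simpa using h3
            · left; exact ⟨τ, h1, h4, by simpa [h4] using h3⟩
      · rintro ⟨p, hp1, hp2, hp3, hp4⟩
        by_cases hex : ∃ τ, t < τ ∧ τ ≤ m ∧ p τ ∈ F
        · refine ⟨p m, true, (IH (p m) true).2 ⟨p, hp1, rfl,
            fun i h1 h2 => hp3 i h1 (by omega), by simpa using hex⟩,
            by rw [← hp2]; exact hp3 m hm (by omega), ?_⟩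
          rw [hp4]
          simp only [true_or, iff_true]
          obtain ⟨τ, h1, h2, h3⟩ := hex
          exact ⟨τ, h1, by omega, h3⟩
        · refine ⟨p m, false, (IH (p m) false).2 ⟨p, hp1, rfl,
            fun i h1 h2 => hp3 i h1 (by omega), by simpa using hex⟩,
            by rw [← hp2]; exact hp3 m hm (by omega), ?_⟩
          rw [hp4]
          simp only [Bool.false_eq_true, false_or]
          constructor
          · rintro ⟨τ, h1, h2, h3⟩
            rcases Nat.lt_or_ge m τ with h4 | h4
            · have : τ = m + 1 := by omega
              subst this; rwa [hp2] at h3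
            · exact absurd ⟨τ, h1, h4, h3⟩ hex
          · intro h1
            exact ⟨m + 1, by omega, le_refl _, by rwa [hp2]⟩


/-! ### Support semantics -/

lemma mem_supp_wordAct_base_iff {δ : K → α → Set K} {F : Set K} (x : ℕ → α) {t m : ℕ}
    (h : t ≤ m) (A : Set K) (q' : K) :
    q' ∈ supp (wordAct δ F (base A) (seg x t m)) ↔
      ∃ p : ℕ → K, p t ∈ A ∧ p m = q' ∧ IsSegRun δ x t m p := by
  constructor
  · rintro ⟨b, hb⟩
    obtain ⟨p, h1, h2, h3, _⟩ := (mem_wordAct_base_iff x h A q' b).1 hb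
    exact ⟨p, h1, h2, h3⟩
  · rintro ⟨p, h1, h2, h3⟩
    by_cases hex : ∃ τ, t < τ ∧ τ ≤ m ∧ p τ ∈ F
    · exact ⟨true, (mem_wordAct_base_iff x h A q' true).2 ⟨p, h1, h2, h3, by simpa using hex⟩⟩
    · exact ⟨false, (mem_wordAct_base_iff x h A q' false).2 ⟨p, h1, h2, h3, by simpa using hex⟩⟩

lemma mem_succs_wordAct_base_iff {δ : K → α → Set K} {F : Set K} (x : ℕ → α) {t m : ℕ}
    (h : t ≤ m) (A : Set K) (q' : K) :
    q' ∈ succs (wordAct δ F (base A) (seg x t m)) ↔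
      ∃ p : ℕ → K, p t ∈ A ∧ p m = q' ∧ IsSegRun δ x t m p ∧ ∃ τ, t < τ ∧ τ ≤ m ∧ p τ ∈ F := by
  rw [succs, Set.mem_setOf_eq, mem_wordAct_base_iff x h A q' true]
  constructor
  · rintro ⟨p, h1, h2, h3, h4⟩; exact ⟨p, h1, h2, h3, h4.1 rfl⟩
  · rintro ⟨p, h1, h2, h3, h4⟩; exact ⟨p, h1, h2, h3, by simpa using h4⟩

@[simp] lemma supp_base (A : Set K) : supp (base A) = A := by
  ext q; constructor
  · rintro ⟨b, hb, _⟩; exact hb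
  · intro h; exact ⟨false, h, rfl⟩

/-! ### The flag order and monotonicity -/

/-- `S` is below `S'` if every element of `S` is in `S'`, possibly with a raised flag. -/
def sle (S S' : Set (K × Bool)) : Prop :=
  ∀ q b, (q, b) ∈ S → (q, b) ∈ S' ∨ (q, true) ∈ S'

lemma sle_of_subset {S S' : Set (K × Bool)} (h : S ⊆ S') : sle S S' :=
  fun _ _ hm => Or.inl (h hm)

lemma sle_base_supp (S : Set (K × Bool)) : sle (base (supp S)) S := by
  rintro q b ⟨⟨c, hc⟩, hb⟩
  cases c with
  | false => subst hb; exact Or.inl hc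
  | true => exact Or.inr hc

lemma sle_mhStep {δ : K → α → Set K} {F : Set K} {S S' : Set (K × Bool)} (h : sle S S')
    (a : α) : sle (mhStep δ F S a) (mhStep δ F S' a) := by
  rintro q' b hb
  rw [mem_mhStep] at hb
  obtain ⟨q, c, hqc, h1, h2⟩ := hb
  rcases h q c hqc with h3 | h3
  · left; exact mem_mhStep.2 ⟨q, c, h3, h1, h2⟩
  · right; exact mem_mhStep.2 ⟨q, true, h3, h1, by simp⟩

lemma sle_wordAct {δ : K → α → Set K} {F : Set K} {S S' : Set (K × Bool)} (h : sle S S')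
    (w : List α) : sle (wordAct δ F S w) (wordAct δ F S' w) := by
  induction w generalizing S S' with
  | nil => exact h
  | cons a w IH => exact IH (sle_mhStep h a)

lemma succs_subset_of_sle {S S' : Set (K × Bool)} (h : sle S S') : succs S ⊆ succs S' := by
  intro q hq
  rcases h q true hq with h1 | h1 <;> exact h1

/-! ### The fixpoint hierarchy -/

variable (δ : K → α → Set K) (F : Set K)

/-- One unfolding of the Banach–Mazur "chain building" operator. -/
def Psi (H : Set (Set (K × Bool))) : Set (Set (K × Bool)) :=
  {S | ∀ u : List α, ∃ v : List α,
    (succs (wordAct δ F S (u ++ v))).Nonempty ∧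
      base (succs (wordAct δ F S (u ++ v))) ∈ H}

lemma Psi_mono {H H' : Set (Set (K × Bool))} (h : H ⊆ H') : Psi δ F H ⊆ Psi δ F H' := by
  intro S hS u
  obtain ⟨v, h1, h2⟩ := hS u
  exact ⟨v, h1, h h2⟩

/-- The iterates of `Psi` starting from everything. -/
def Hit (k : ℕ) : Set (Set (K × Bool)) := (Psi δ F)^[k] Set.univ

@[simp] lemma Hit_zero : Hit δ F 0 = Set.univ := rfl

lemma Hit_succ (k : ℕ) : Hit δ F (k + 1) = Psi δ F (Hit δ F k) :=
  Function.iterate_succ_apply' _ _ _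

lemma Hit_succ_subset (k : ℕ) : Hit δ F (k + 1) ⊆ Hit δ F k := by
  induction k with
  | zero => intro S _; trivial
  | succ k IH =>
      rw [Hit_succ δ F (k+1)]
      calc Psi δ F (Hit δ F (k+1)) ⊆ Psi δ F (Hit δ F k) := Psi_mono δ F IH
        _ = Hit δ F (k+1) := (Hit_succ δ F k).symm

lemma Hit_anti : ∀ {j k : ℕ}, j ≤ k → Hit δ F k ⊆ Hit δ F j := by
  intro j k h
  induction k, h using Nat.le_induction with
  | base => exact subset_rfl
  | succ k _ IH => exact (Hit_succ_subset δ F k).trans IH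

lemma sle_mem_Hit {S S' : Set (K × Bool)} (h : sle S S') :
    ∀ k, S ∈ Hit δ F k → S' ∈ Hit δ F k := by
  intro k
  induction k generalizing S S' with
  | zero => intro _; trivial
  | succ k IH =>
      rw [Hit_succ δ F k]
      intro hS u
      obtain ⟨v, h1, h2⟩ := hS u
      have hsub := succs_subset_of_sle (sle_wordAct (δ := δ) (F := F) h (u ++ v))
      refine ⟨v, h1.mono hsub, ?_⟩
      exact IH (sle_of_subset (fun p hp => ⟨hsub hp.1, hp.2⟩)) h2

lemma mhStep_mem_Psi {H : Set (Set (K × Bool))} {S : Set (K × Bool)} (hS : S ∈ Psi δ F H)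
    (a : α) : mhStep δ F S a ∈ Psi δ F H := by
  intro u
  obtain ⟨v, h1, h2⟩ := hS (a :: u)
  have he : wordAct δ F S (a :: u ++ v) = wordAct δ F (mhStep δ F S a) (u ++ v) := rfl
  rw [he] at h1 h2
  exact ⟨v, h1, h2⟩

variable [Finite K]

lemma exists_stab : ∃ N, Hit δ F (N + 1) = Hit δ F N := by
  obtain ⟨a, b, hne, heq⟩ := Finite.exists_ne_map_eq_of_infinite (Hit δ F)
  rcases Nat.lt_or_ge a b with h | h
  · exact ⟨a, subset_antisymm (Hit_succ_subset δ F a)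
      (heq ▸ Hit_anti δ F (by omega) : Hit δ F a ⊆ Hit δ F (a+1))⟩
  · have h' : b < a := by omega
    exact ⟨b, subset_antisymm (Hit_succ_subset δ F b)
      (heq.symm ▸ Hit_anti δ F (by omega) : Hit δ F b ⊆ Hit δ F (b+1))⟩

/-- The stabilization level. -/
noncomputable def Nst : ℕ := Classical.choose (exists_stab δ F)

lemma Hit_Nst_succ : Hit δ F (Nst δ F + 1) = Hit δ F (Nst δ F) := by
  unfold Nst
  exact Classical.choose_spec (exists_stab δ F)

lemma Hit_Nst_fixed : Psi δ F (Hit δ F (Nst δ F)) = Hit δ F (Nst δ F) := by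
  rw [← Hit_succ δ F (Nst δ F)]; exact Hit_Nst_succ δ F

/-- The rank of a non-winning set of states. -/
noncomputable def rho (B : Set K) : ℕ := sInf {k | base B ∉ Hit δ F (k + 1)}

lemma rho_nonempty {B : Set K} (h : base B ∉ Hit δ F (Nst δ F)) :
    {k | base B ∉ Hit δ F (k + 1)}.Nonempty := by
  refine ⟨Nst δ F, ?_⟩
  rw [Set.mem_setOf_eq, Hit_Nst_succ δ F]
  exact h

lemma rho_mem {B : Set K} (h : base B ∉ Hit δ F (Nst δ F)) :
    base B ∉ Hit δ F (rho δ F B + 1) :=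
  Nat.sInf_mem (rho_nonempty δ F h)

lemma rho_le {B : Set K} {k : ℕ} (h : base B ∉ Hit δ F (k + 1)) : rho δ F B ≤ k :=
  Nat.sInf_le h

lemma not_mem_Psi_unfold {H : Set (Set (K × Bool))} {S : Set (K × Bool)}
    (h : S ∉ Psi δ F H) :
    ∃ u : List α, ∀ v : List α,
      succs (wordAct δ F S (u ++ v)) = ∅ ∨
        base (succs (wordAct δ F S (u ++ v))) ∉ H := by
  rw [Psi, Set.mem_setOf_eq] at h
  push_neg at h
  obtain ⟨u, hu⟩ := h
  refine ⟨u, fun v => ?_⟩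
  by_cases h1 : (succs (wordAct δ F S (u ++ v))).Nonempty
  · exact Or.inr (hu v h1)
  · exact Or.inl (Set.not_nonempty_iff_eq_empty.1 h1)

lemma killer_aux {S : Set (K × Bool)} (h : base (supp S) ∉ Hit δ F (Nst δ F)) :
    ∃ u : List α, ∀ v : List α,
      succs (wordAct δ F (base (supp S)) (u ++ v)) = ∅ ∨
        base (succs (wordAct δ F (base (supp S)) (u ++ v))) ∉
          Hit δ F (rho δ F (supp S)) :=
  not_mem_Psi_unfold δ F (by
    rw [← Hit_succ δ F (rho δ F (supp S))]; exact rho_mem δ F h)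

/-- The killing word for an MH-set whose base support is non-winning. -/
noncomputable def killer (S : Set (K × Bool)) : List α :=
  if h : base (supp S) ∉ Hit δ F (Nst δ F) then Classical.choose (killer_aux δ F h) else []

lemma killer_spec {S : Set (K × Bool)} (h : base (supp S) ∉ Hit δ F (Nst δ F)) :
    ∀ v : List α,
      succs (wordAct δ F (base (supp S)) (killer δ F S ++ v)) = ∅ ∨
        base (succs (wordAct δ F (base (supp S)) (killer δ F S ++ v))) ∉
          Hit δ F (rho δ F (supp S)) := by
  rw [killer, dif_pos h]
  exact Classical.choose_spec (killer_aux δ F h)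

variable [Nonempty α]

/-- The building word for a winning MH-set. -/
noncomputable def builder (D : Set (K × Bool)) : List α :=
  if h : ∃ v, v ≠ [] ∧ (succs (wordAct δ F D v)).Nonempty ∧
      base (succs (wordAct δ F D v)) ∈ Hit δ F (Nst δ F) then
    Classical.choose h
  else [Classical.arbitrary α]

lemma builder_ne_nil (D : Set (K × Bool)) : builder δ F D ≠ [] := by
  rw [builder]
  split
  case isTrue h => exact (Classical.choose_spec h).1
  case isFalse => simp

lemma builder_spec {D : Set (K × Bool)} (h : D ∈ Hit δ F (Nst δ F)) :
    (succs (wordAct δ F D (builder δ F D))).Nonempty ∧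
      base (succs (wordAct δ F D (builder δ F D))) ∈ Hit δ F (Nst δ F) := by
  have h1 : D ∈ Psi δ F (Hit δ F (Nst δ F)) := by rw [Hit_Nst_fixed]; exact h
  obtain ⟨v, hv1, hv2⟩ := h1 [Classical.arbitrary α]
  have hex : ∃ v, v ≠ [] ∧ (succs (wordAct δ F D v)).Nonempty ∧
      base (succs (wordAct δ F D v)) ∈ Hit δ F (Nst δ F) :=
    ⟨Classical.arbitrary α :: v, by simp, hv1, hv2⟩
  rw [builder, dif_pos hex]
  exact ⟨(Classical.choose_spec hex).2.1, (Classical.choose_spec hex).2.2⟩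

/-- Sequential killing of a list of MH-sets. -/
noncomputable def killAll : List (Set (K × Bool)) → List α
  | [] => []
  | S :: r =>
      killer δ F S ++ killAll (r.map fun S' => wordAct δ F S' (killer δ F S))
termination_by l => l.length
decreasing_by simpa using Nat.lt_succ_self _

lemma killAll_spec : ∀ (n : ℕ) (l : List (Set (K × Bool))), l.length = n →
    ∀ S ∈ l, ∃ w₁ w₂ : List α,
      killAll δ F l = w₁ ++ killer δ F (wordAct δ F S w₁) ++ w₂ := by
  intro n
  induction n using Nat.strong_induction_on with
  | _ n IH =>
    intro l hl S hS
    cases l with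
    | nil => cases hS
    | cons S₀ r =>
        have heq : killAll δ F (S₀ :: r) =
            killer δ F S₀ ++
              killAll δ F (r.map fun S' => wordAct δ F S' (killer δ F S₀)) := by
          rw [killAll]
        rw [heq]
        rcases List.mem_cons.1 hS with rfl | hS
        · exact ⟨[], killAll δ F (r.map fun S' => wordAct δ F S' (killer δ F S)),
            by simpa using heq⟩
        · have hlen : (r.map fun S' => wordAct δ F S' (killer δ F S₀)).length < n := by
            simp [← hl]
          obtain ⟨w₁, w₂, hw⟩ := IH _ hlen _ rfl (wordAct δ F S (killer δ F S₀))
            (List.mem_map_of_mem hS)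
          refine ⟨killer δ F S₀ ++ w₁, w₂, ?_⟩
          rw [hw, wordAct_append]
          simp [List.append_assoc]


/-! ### The strategy machine -/

variable (q₀ : K)

/-- Evolution of plain state sets. -/
def reachStep (T : Set K) (a : α) : Set K := {q' | ∃ q ∈ T, q' ∈ δ q a}

lemma supp_mhStep (S : Set (K × Bool)) (a : α) :
    supp (mhStep δ F S a) = reachStep δ (supp S) a := by
  ext q'
  constructor
  · rintro ⟨b', hb'⟩
    rw [mem_mhStep] at hb'
    obtain ⟨q, c, h1, h2, _⟩ := hb'
    exact ⟨q, ⟨c, h1⟩, h2⟩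
  · rintro ⟨q, ⟨c, hc⟩, h2⟩
    by_cases hF : c = true ∨ q' ∈ F
    · exact ⟨true, mem_mhStep.2 ⟨q, c, hc, h2, by simpa using hF⟩⟩
    · exact ⟨false, mem_mhStep.2 ⟨q, c, hc, h2, by simpa using hF⟩⟩

/-- The set of states reachable from `q₀` after reading `x↾n`. -/
def Tx (x : ℕ → α) (n : ℕ) : Set K := supp (wordAct δ F (base {q₀}) (seg x 0 n))

@[simp] lemma Tx_zero (x : ℕ → α) : Tx δ F q₀ x 0 = {q₀} := by
  simp [Tx]

lemma Tx_succ (x : ℕ → α) (n : ℕ) :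
    Tx δ F q₀ x (n+1) = reachStep δ (Tx δ F q₀ x n) (x n) := by
  rw [Tx, Tx, seg_succ x (Nat.zero_le n), wordAct_snoc, supp_mhStep]

lemma mem_Tx_iff (x : ℕ → α) (n : ℕ) (q : K) :
    q ∈ Tx δ F q₀ x n ↔ ∃ p : ℕ → K, p 0 = q₀ ∧ p n = q ∧ IsSegRun δ x 0 n p := by
  rw [Tx, mem_supp_wordAct_base_iff x (Nat.zero_le n)]
  simp

/-- Machine states: either the "pre" mode carrying the reachable set and the collection of
threads, or the "main" mode carrying the distinguished MH-set. -/
abbrev Mst (α K : Type*) := (Set K × Set (Set (K × Bool))) ⊕ (Set (K × Bool))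

instance [Finite K] : Finite (Mst α K) := by
  unfold Mst; infer_instance

instance : Nonempty (Mst α K) := ⟨Sum.inr ∅⟩

/-- Good collections: some thread is winning. -/
def GoodC (C : Set (Set (K × Bool))) : Prop := ∃ S ∈ C, S ∈ Hit δ F (Nst δ F)

/-- Birth data of a thread. -/
def Birth (x : ℕ → α) (σ : ℕ) (p : K) : Prop :=
  (σ = 0 ∧ p = q₀) ∨ (p ∈ F ∧ p ∈ Tx δ F q₀ x σ)

/-- The next collection of threads. -/
def nextC (C : Set (Set (K × Bool))) (T' : Set K) (a : α) : Set (Set (K × Bool)) :=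
  (fun S => mhStep δ F S a) '' C ∪ (fun q => base {q}) '' (F ∩ T')

/-- One step of the strategy machine. -/
noncomputable def mstep : Mst α K → α → Mst α K
  | .inl (T, C), a =>
      if h : GoodC δ F (nextC δ F C (reachStep δ T a) a) then .inr (Classical.choose h)
      else .inl (reachStep δ T a, nextC δ F C (reachStep δ T a) a)
  | .inr D, a =>
      if (succs (mhStep δ F D a)).Nonempty ∧
          base (succs (mhStep δ F D a)) ∈ Hit δ F (Nst δ F) then
        .inr (base (succs (mhStep δ F D a)))
      else .inr (mhStep δ F D a)

/-- The initial collection. -/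
def C0 : Set (Set (K × Bool)) :=
  insert (base {q₀}) ((fun q => base {q}) '' (F ∩ {q₀}))

/-- The initial machine state. -/
noncomputable def minit : Mst α K :=
  if h : GoodC δ F (C0 F q₀) then .inr (Classical.choose h) else .inl ({q₀}, C0 F q₀)

/-- The run of the machine on `x`. -/
noncomputable def mrun (x : ℕ → α) : ℕ → Mst α K
  | 0 => minit δ F q₀
  | n + 1 => mstep δ F (mrun x n) (x n)

/-- Machine evolution along a word. -/
noncomputable def mword (M : Mst α K) (w : List α) : Mst α K := w.foldl (mstep δ F) M

lemma mword_append (M : Mst α K) (u v : List α) :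
    mword δ F (M : Mst α K) (u ++ v) = mword δ F (mword δ F M u) v :=
  List.foldl_append

lemma mrun_eq_mword (x : ℕ → α) {n m : ℕ} (h : n ≤ m) :
    mrun δ F q₀ x m = mword δ F (mrun δ F q₀ x n) (seg x n m) := by
  induction m, h using Nat.le_induction with
  | base => simp [mword]
  | succ m hm IH =>
      rw [seg_succ x hm, mword_append]
      show mrun δ F q₀ x (m+1) = mstep δ F (mword δ F (mrun δ F q₀ x n) (seg x n m)) (x m)
      rw [← IH]
      rfl

def IsMain : Mst α K → Prop
  | .inl _ => False
  | .inr _ => True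

lemma isMain_mstep_inr (D : Set (K × Bool)) (a : α) : IsMain (mstep δ F (.inr D) a) := by
  rw [mstep]
  split <;> trivial

lemma main_absorbing (x : ℕ → α) {n m : ℕ} (h : n ≤ m) (hm : IsMain (mrun δ F q₀ x n)) :
    IsMain (mrun δ F q₀ x m) := by
  induction m, h using Nat.le_induction with
  | base => exact hm
  | succ m hm2 IH =>
      show IsMain (mstep δ F (mrun δ F q₀ x m) (x m))
      rcases hM : mrun δ F q₀ x m with TC | D
      · rw [hM] at IH; exact absurd IH id
      · exact isMain_mstep_inr δ F D (x m)

/-- The main machine invariants. -/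
lemma mrun_inv (x : ℕ → α) : ∀ n : ℕ,
    (∀ T C, mrun δ F q₀ x n = .inl (T, C) →
      T = Tx δ F q₀ x n ∧ (∀ S ∈ C, S ∉ Hit δ F (Nst δ F)) ∧
      (∀ σ, σ ≤ n → ∀ p : K, Birth δ F q₀ x σ p →
        wordAct δ F (base {p}) (seg x σ n) ∈ C) ∧
      (∀ S ∈ C, ∃ σ, σ ≤ n ∧ ∃ p, Birth δ F q₀ x σ p ∧
        S = wordAct δ F (base {p}) (seg x σ n))) ∧
    (∀ D, mrun δ F q₀ x n = .inr D → D ∈ Hit δ F (Nst δ F)) := by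
  have hC0form : ∀ S ∈ C0 F q₀, ∃ σ, σ ≤ 0 ∧ ∃ p, Birth δ F q₀ x σ p ∧
      S = wordAct δ F (base {p}) (seg x σ 0) := by
    intro S hS
    rcases Set.mem_insert_iff.1 hS with rfl | ⟨q, hq, rfl⟩
    · exact ⟨0, le_refl _, q₀, Or.inl ⟨rfl, rfl⟩, by simp⟩
    · rcases hq with ⟨hq1, hq2⟩
      exact ⟨0, le_refl _, q, Or.inr ⟨hq1, by simpa using hq2⟩, by simp⟩
  have hC0mem : ∀ σ, σ ≤ 0 → ∀ p : K, Birth δ F q₀ x σ p →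
      wordAct δ F (base {p}) (seg x σ 0) ∈ C0 F q₀ := by
    intro σ hσ p hp
    interval_cases σ
    rcases hp with ⟨_, rfl⟩ | ⟨h1, h2⟩
    · simp [C0]
    · right
      exact ⟨p, ⟨h1, by simpa using h2⟩, by simp⟩
  intro n
  induction n with
  | zero =>
      constructor
      · intro T C h
        rw [mrun, minit] at h
        split at h
        · cases h
        case isFalse hng =>
          rw [Sum.inl.injEq, Prod.mk.injEq] at h
          obtain ⟨hT, hC⟩ := h
          subst hT
          subst hC
          refine ⟨(Tx_zero δ F q₀ x).symm, ?_, hC0mem, hC0form⟩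
          intro S hS hSH
          exact hng ⟨S, hS, hSH⟩
      · intro D h
        rw [mrun, minit] at h
        split at h
        case isTrue hg =>
          rw [Sum.inr.injEq] at h
          rw [← h]
          exact (Classical.choose_spec hg).2
        · cases h
  | succ n IH =>
      obtain ⟨IHl, IHr⟩ := IH
      constructor
      · intro T C h
        rw [mrun] at h
        rcases hM : mrun δ F q₀ x n with ⟨T0, C0'⟩ | D
        · rw [hM, mstep] at h
          split at h
          · cases h
          case isFalse hng =>
            obtain ⟨hT0, hC5, hC3, hC4⟩ := IHl T0 C0' hM
            rw [Sum.inl.injEq, Prod.mk.injEq] at h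
            have hTT : T = reachStep δ T0 (x n) := h.1.symm
            have hCC : C = nextC δ F C0' (reachStep δ T0 (x n)) (x n) := h.2.symm
            have hTx : reachStep δ T0 (x n) = Tx δ F q₀ x (n+1) := by
              rw [hT0, ← Tx_succ]
            refine ⟨by rw [hTT, hTx], ?_, ?_, ?_⟩
            · intro S hS hSH
              rw [hCC] at hS
              exact hng ⟨S, hS, hSH⟩
            · intro σ hσ p hp
              rcases Nat.lt_or_ge σ (n+1) with h1 | h1
              · have hσn : σ ≤ n := by omega
                have := hC3 σ hσn p hp
                rw [hCC, nextC]
                left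
                refine ⟨wordAct δ F (base {p}) (seg x σ n), this, ?_⟩
                rw [seg_succ x hσn, wordAct_snoc]
              · have hσ1 : σ = n + 1 := by omega
                subst hσ1
                rcases hp with ⟨h2, _⟩ | ⟨h2, h3⟩
                · omega
                rw [hCC, nextC]
                right
                refine ⟨p, ⟨h2, by rwa [hTx]⟩, by simp⟩
            · intro S hS
              rw [hCC, nextC] at hS
              rcases hS with ⟨S0, hS0, rfl⟩ | ⟨q, hq, rfl⟩
              · obtain ⟨σ, hσ, p, hb, rfl⟩ := hC4 S0 hS0
                refine ⟨σ, by omega, p, hb, ?_⟩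
                rw [seg_succ x hσ, wordAct_snoc]
              · exact ⟨n+1, le_refl _, q, Or.inr ⟨hq.1, by rw [← hTx]; exact hq.2⟩, by simp⟩
        · rw [hM, mstep] at h
          split at h <;> cases h
      · intro D h
        rw [mrun] at h
        rcases hM : mrun δ F q₀ x n with ⟨T0, C0'⟩ | D0
        · rw [hM, mstep] at h
          split at h
          case isTrue hg =>
            rw [Sum.inr.injEq] at h
            rw [← h]
            exact (Classical.choose_spec hg).2
          · cases h
        · rw [hM, mstep] at h
          have hD0 : D0 ∈ Hit δ F (Nst δ F) := IHr D0 hM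
          split at h
          case isTrue hg =>
            rw [Sum.inr.injEq] at h
            rw [← h]
            exact hg.2
          case isFalse =>
            rw [Sum.inr.injEq] at h
            rw [← h]
            have : D0 ∈ Psi δ F (Hit δ F (Nst δ F)) := by
              rw [Hit_Nst_fixed]; exact hD0
            have := mhStep_mem_Psi δ F this (x n)
            rw [Hit_Nst_fixed] at this
            exact this


/-! ### The strategy word and follow positions -/

/-- An enumeration of a (finite) collection of MH-sets. -/
noncomputable def enumC (C : Set (Set (K × Bool))) : List (Set (K × Bool)) :=
  (Set.toFinite C).toFinset.toList

lemma mem_enumC {C : Set (Set (K × Bool))} {S : Set (K × Bool)} :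
    S ∈ enumC C ↔ S ∈ C := by
  rw [enumC, Finset.mem_toList, Set.Finite.mem_toFinset]

/-- The strategy: what the machine would like to see next. -/
noncomputable def fword : Mst α K → List α
  | .inl (_, C) => killAll δ F (enumC C) ++ [Classical.arbitrary α]
  | .inr D => builder δ F D

lemma fword_ne_nil (M : Mst α K) : fword δ F M ≠ [] := by
  rcases M with ⟨T, C⟩ | D
  · rw [fword]; simp
  · rw [fword]; exact builder_ne_nil δ F D

/-- `x` follows the strategy at position `n`. -/
def FollowAt (x : ℕ → α) (n : ℕ) : Prop :=
  seg x n (n + (fword δ F (mrun δ F q₀ x n)).length) = fword δ F (mrun δ F q₀ x n)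

/-- `x` follows the strategy infinitely often. -/
def GenericX (x : ℕ → α) : Prop := ∀ N, ∃ n, N ≤ n ∧ FollowAt δ F q₀ x n

lemma seg_split {x : ℕ → α} {n : ℕ} {u v : List α}
    (h : seg x n (n + (u ++ v).length) = u ++ v) :
    seg x n (n + u.length) = u ∧
      seg x (n + u.length) (n + u.length + v.length) = v := by
  have h1 : seg x n (n + u.length) ++ seg x (n + u.length) (n + u.length + v.length) =
      seg x n (n + u.length + v.length) :=
    seg_append x (by omega) (by omega)
  rw [List.length_append] at h
  have h2 : n + (u.length + v.length) = n + u.length + v.length := by omega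
  rw [h2] at h
  rw [h] at h1
  have h3 : (seg x n (n + u.length)).length = u.length := by simp
  exact List.append_inj h1 h3

/-! ### Part B: if the machine never enters main mode, a generic `x` is rejected -/

lemma kill_extract (x : ℕ → α) {n σ : ℕ} {p : K} (hσn : σ ≤ n)
    (hb : Birth δ F q₀ x σ p)
    (hnm : ∀ k, ¬ IsMain (mrun δ F q₀ x k))
    (hf : FollowAt δ F q₀ x n) :
    ∃ t e : ℕ, n ≤ t ∧ t ≤ e ∧
      base (supp (wordAct δ F (base {p}) (seg x σ t))) ∉ Hit δ F (Nst δ F) ∧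
      ∀ m, e ≤ m →
        succs (wordAct δ F (base (supp (wordAct δ F (base {p}) (seg x σ t)))) (seg x t m))
            = ∅ ∨
          base (succs (wordAct δ F (base (supp (wordAct δ F (base {p}) (seg x σ t))))
            (seg x t m))) ∉ Hit δ F (rho δ F (supp (wordAct δ F (base {p}) (seg x σ t)))) := by
  obtain ⟨T, C, hM⟩ : ∃ T C, mrun δ F q₀ x n = .inl (T, C) := by
    rcases hM : mrun δ F q₀ x n with ⟨T, C⟩ | D
    · exact ⟨T, C, rfl⟩
    · exact absurd (by rw [hM]; trivial) (hnm n)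
  obtain ⟨hinv, _⟩ := mrun_inv δ F q₀ x n
  obtain ⟨hT, hC5, hC3, hC4⟩ := hinv T C hM
  have hS : wordAct δ F (base {p}) (seg x σ n) ∈ C := hC3 σ hσn p hb
  obtain ⟨w₁, w₂, hka⟩ := killAll_spec δ F (enumC C).length (enumC C) rfl _ (mem_enumC.2 hS)
  set S₁ := wordAct δ F (wordAct δ F (base {p}) (seg x σ n)) w₁ with hS₁
  have hfw : fword δ F (mrun δ F q₀ x n) =
      w₁ ++ (killer δ F S₁ ++ (w₂ ++ [Classical.arbitrary α])) := by
    rw [hM]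
    show killAll δ F (enumC C) ++ [Classical.arbitrary α] = _
    rw [hka]
    simp [hS₁]
  rw [FollowAt, hfw] at hf
  obtain ⟨hf1, hf2⟩ := seg_split hf
  set t := n + w₁.length with ht
  -- identify S₁ with the time-t thread value
  have hS₁t : S₁ = wordAct δ F (base {p}) (seg x σ t) := by
    rw [hS₁, ← wordAct_append, ← hf1, seg_append x hσn (by omega)]
  obtain ⟨hf3, _⟩ := seg_split hf2
  rw [hS₁t] at hf3
  -- membership at time t
  obtain ⟨Tt, Ct, hMt⟩ : ∃ T C, mrun δ F q₀ x t = .inl (T, C) := by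
    rcases hM' : mrun δ F q₀ x t with ⟨T', C'⟩ | D
    · exact ⟨T', C', rfl⟩
    · exact absurd (by rw [hM']; trivial) (hnm t)
  obtain ⟨hinvt, _⟩ := mrun_inv δ F q₀ x t
  obtain ⟨_, hC5t, hC3t, _⟩ := hinvt Tt Ct hMt
  have hSt : wordAct δ F (base {p}) (seg x σ t) ∈ Ct := hC3t σ (by omega) p hb
  have hnotHit : wordAct δ F (base {p}) (seg x σ t) ∉ Hit δ F (Nst δ F) :=
    hC5t _ hSt
  have hbase : base (supp (wordAct δ F (base {p}) (seg x σ t))) ∉ Hit δ F (Nst δ F) := by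
    intro hmem
    exact hnotHit (sle_mem_Hit δ F (sle_base_supp _) _ hmem)
  refine ⟨t, t + (killer δ F (wordAct δ F (base {p}) (seg x σ t))).length,
    by omega, by omega, hbase, ?_⟩
  intro m hm
  have hsegm : seg x t m = killer δ F (wordAct δ F (base {p}) (seg x σ t)) ++
      seg x (t + (killer δ F (wordAct δ F (base {p}) (seg x σ t))).length) m := by
    rw [← seg_append x (show t ≤ t +
      (killer δ F (wordAct δ F (base {p}) (seg x σ t))).length by omega) hm, hf3]
  rw [hsegm]
  exact killer_spec δ F (S := wordAct δ F (base {p}) (seg x σ t)) hbase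
    (seg x (t + (killer δ F (wordAct δ F (base {p}) (seg x σ t))).length) m)

theorem partB (x : ℕ → α) (r : ℕ → K) (hr0 : r 0 = q₀)
    (hrs : ∀ n, r (n + 1) ∈ δ (r n) (x n)) (hinf : {n | r n ∈ F}.Infinite)
    (hnm : ∀ n, ¬ IsMain (mrun δ F q₀ x n)) (hgen : GenericX δ F q₀ x) : False := by
  have hTx : ∀ n, r n ∈ Tx δ F q₀ x n := by
    intro n
    exact (mem_Tx_iff δ F q₀ x n (r n)).2 ⟨r, hr0, rfl, fun i _ _ => hrs i⟩
  have hpath : ∀ σ t, σ ≤ t → r t ∈ supp (wordAct δ F (base {r σ}) (seg x σ t)) := by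
    intro σ t h
    exact (mem_supp_wordAct_base_iff x h {r σ} (r t)).2 ⟨r, rfl, rfl, fun i _ _ => hrs i⟩
  have desc : ∀ γ : ℕ, ∀ t e : ℕ, ∀ B₀ : Set K, t ≤ e → r t ∈ B₀ →
      (∀ m, e ≤ m → succs (wordAct δ F (base B₀) (seg x t m)) = ∅ ∨
        base (succs (wordAct δ F (base B₀) (seg x t m))) ∉ Hit δ F γ) → False := by
    intro γ
    induction γ using Nat.strong_induction_on with
    | _ γ IH =>
      intro t e B₀ hte hrt hg
      obtain ⟨τ', hτ'F, hτ'gt⟩ := hinf.exists_gt e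
      have h1 : r τ' ∈ succs (wordAct δ F (base B₀) (seg x t τ')) := by
        refine (mem_succs_wordAct_base_iff x (by omega) B₀ (r τ')).2
          ⟨r, hrt, rfl, fun i _ _ => hrs i, τ', by omega, le_refl _, hτ'F⟩
      rcases hg τ' (by omega) with h2 | h2
      · rw [h2] at h1; exact h1
      cases γ with
      | zero => exact h2 (by rw [Hit_zero]; trivial)
      | succ γ' =>
        obtain ⟨n', hn'ge, hf'⟩ := hgen (τ' + 1)
        have hb' : Birth δ F q₀ x τ' (r τ') := Or.inr ⟨hτ'F, hTx τ'⟩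
        obtain ⟨t', e', hn't', ht'e', hnot', hg'⟩ :=
          kill_extract δ F q₀ x (n := n') (by omega) hb' hnm hf'
        set B₀' := supp (wordAct δ F (base {r τ'}) (seg x τ' t')) with hB₀'
        have hτ't' : τ' ≤ t' := by omega
        have hrt' : r t' ∈ B₀' := hpath τ' t' hτ't'
        have hsub : B₀' ⊆ succs (wordAct δ F (base B₀) (seg x t t')) := by
          intro q hq
          obtain ⟨π, hπ1, hπ2, hπ3⟩ :=
            (mem_supp_wordAct_base_iff x hτ't' {r τ'} q).1 hq
          have hπτ : π τ' = r τ' := hπ1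
          refine (mem_succs_wordAct_base_iff x (by omega) B₀ q).2
            ⟨fun i => if i < τ' then r i else π i, ?_, ?_, ?_, τ', by omega, by omega, ?_⟩
          · have : t < τ' := by omega
            simpa [this] using hrt
          · have : ¬ t' < τ' := by omega
            simpa [this] using hπ2
          · intro i h1 h2
            rcases Nat.lt_or_ge (i + 1) τ' with h3 | h3
            · have h4 : i < τ' := by omega
              simpa [h3, h4] using hrs i
            · rcases Nat.lt_or_ge i τ' with h4 | h4
              · have h5 : i + 1 = τ' := by omega
                have : ¬ i + 1 < τ' := by omega
                simp only [h4, if_pos, this, if_neg, if_false]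
                rw [h5, hπτ, ← h5]
                exact hrs i
              · have h5 : ¬ i < τ' := by omega
                have h6 : ¬ i + 1 < τ' := by omega
                simpa [h5, h6] using hπ3 i h4 h2
          · have : ¬ τ' < τ' := by omega
            simp only [this, if_neg, if_false]
            rwa [hπτ]
        have ht'big : e ≤ t' := by omega
        have hne : succs (wordAct δ F (base B₀) (seg x t t')) ≠ ∅ := by
          intro hemp
          rw [hemp] at hsub
          exact (hsub hrt' : r t' ∈ (∅ : Set K))
        have h3 : base (succs (wordAct δ F (base B₀) (seg x t t'))) ∉ Hit δ F (γ' + 1) := by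
          rcases hg t' ht'big with h | h
          · exact absurd h hne
          · exact h
        have hB₀'γ : base B₀' ∉ Hit δ F (γ' + 1) := by
          intro hmem
          refine h3 (sle_mem_Hit δ F (sle_of_subset ?_) _ hmem)
          intro pq hpq
          exact ⟨hsub hpq.1, hpq.2⟩
        have hlt : rho δ F B₀' < γ' + 1 := Nat.lt_succ_of_le (rho_le δ F hB₀'γ)
        exact IH (rho δ F B₀') hlt t' e' B₀' ht'e' hrt' hg'
  obtain ⟨n₁, _, hf₁⟩ := hgen 0
  have hb₀ : Birth δ F q₀ x 0 q₀ := Or.inl ⟨rfl, rfl⟩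
  obtain ⟨t, e, _, hte, hnot, hg⟩ :=
    kill_extract δ F q₀ x (n := n₁) (Nat.zero_le n₁) hb₀ hnm hf₁
  refine desc (rho δ F (supp (wordAct δ F (base {q₀}) (seg x 0 t)))) t e _ hte ?_ hg
  have := hpath 0 t (Nat.zero_le t)
  rwa [hr0] at this


/-! ### Helpers: unbounded sets, pigeonhole, König -/

lemma infinite_of_unbounded {S : Set ℕ} (h : ∀ N, ∃ k, N ≤ k ∧ k ∈ S) : S.Infinite := by
  intro hfin
  obtain ⟨B, hB⟩ := hfin.bddAbove
  obtain ⟨k, hk1, hk2⟩ := h (B + 1)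
  exact absurd (hB hk2) (by omega)

lemma exists_infinite_fiber' {β : Type*} [Finite β] (f : ℕ → β) :
    ∃ q : β, {d : ℕ | f d = q}.Infinite := by
  by_contra h
  push_neg at h
  have : (Set.univ : Set ℕ).Finite := by
    have : (Set.univ : Set ℕ) ⊆ ⋃ q ∈ (Set.univ : Set β), {d | f d = q} := by
      intro d _
      simp only [Set.mem_iUnion]
      exact ⟨f d, trivial, rfl⟩
    exact Set.Finite.subset (Set.Finite.biUnion Set.finite_univ (fun q _ => h q)) this
  exact Set.infinite_univ this

section Koenig

variable {R : ℕ → K → K → Prop} {A : ℕ → Set K}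

/-- Chains in the layered graph given by `R` through the layers `A`. -/
def KChain (R : ℕ → K → K → Prop) (A : ℕ → Set K) (i j : ℕ) (q : K) : Prop :=
  ∃ g : ℕ → K, g i = q ∧ (∀ k, i ≤ k → k < j → R k (g k) (g (k+1))) ∧
    (∀ k, i ≤ k → k ≤ j → g k ∈ A k)

lemma koenig [Finite K] (hne : ∀ i, (A i).Nonempty)
    (hlink : ∀ i, ∀ q' ∈ A (i+1), ∃ q ∈ A i, R i q q') :
    ∃ s : ℕ → K, (∀ i, s i ∈ A i) ∧ ∀ i, R i (s i) (s (i+1)) := by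
  have trunc : ∀ {i j j' q}, KChain R A i j q → i ≤ j' → j' ≤ j → KChain R A i j' q := by
    rintro i j j' q ⟨g, h1, h2, h3⟩ h4 h5
    exact ⟨g, h1, fun k hk1 hk2 => h2 k hk1 (by omega), fun k hk1 hk2 => h3 k hk1 (by omega)⟩
  have cexists : ∀ (d i : ℕ), ∃ q, KChain R A i (i + d) q := by
    intro d
    induction d with
    | zero =>
        intro i
        obtain ⟨q, hq⟩ := hne i
        refine ⟨q, fun _ => q, rfl, fun k h1 h2 => absurd h2 (by omega), fun k h1 h2 => ?_⟩
        have : k = i := by omega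
        subst this
        exact hq
    | succ d IH =>
        intro i
        have heq : i + (d + 1) = (i + 1) + d := by omega
        rw [heq]
        obtain ⟨q', g, hg1, hg2, hg3⟩ := IH (i + 1)
        have hq'A : q' ∈ A (i + 1) := by
          have := hg3 (i + 1) le_rfl (by omega)
          rwa [hg1] at this
        obtain ⟨q, hqA, hR⟩ := hlink i q' hq'A
        refine ⟨q, fun k => if k ≤ i then q else g k, by simp, ?_, ?_⟩
        · intro k h1 h2
          show R k (if k ≤ i then q else g k) (if k + 1 ≤ i then q else g (k + 1))
          rcases eq_or_lt_of_le h1 with heq2 | h3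
          · subst heq2
            rw [if_pos (le_refl i), if_neg (by omega : ¬ i + 1 ≤ i), hg1]
            exact hR
          · rw [if_neg (by omega : ¬ k ≤ i), if_neg (by omega : ¬ k + 1 ≤ i)]
            exact hg2 k (by omega) (by omega)
        · intro k h1 h2
          show (if k ≤ i then q else g k) ∈ A k
          rcases eq_or_lt_of_le h1 with heq2 | h3
          · subst heq2
            simpa using hqA
          · rw [if_neg (by omega : ¬ k ≤ i)]
            exact hg3 k (by omega) (by omega)
  set B : ℕ → Set K := fun i => {q | ∀ d, KChain R A i (i + d) q} with hB
  have hBne : ∀ i, (B i).Nonempty := by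
    intro i
    choose w hw using fun d => cexists d i
    obtain ⟨q, hq⟩ := exists_infinite_fiber' w
    refine ⟨q, fun d => ?_⟩
    obtain ⟨d', hd'1, hd'2⟩ := hq.exists_gt d
    have : KChain R A i (i + d') q := by
      have := hw d'
      rwa [show w d' = q from hd'1] at this
    exact trunc this (by omega) (by omega)
  have hBstep : ∀ i q, q ∈ B i → ∃ q', q' ∈ B (i + 1) ∧ R i q q' := by
    intro i q hq
    have next : ∀ d : ℕ, ∃ q', KChain R A (i + 1) ((i + 1) + d) q' ∧ R i q q' := by
      intro d
      have hch := hq (d + 1)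
      have heq : i + (d + 1) = (i + 1) + d := by omega
      rw [heq] at hch
      obtain ⟨g, hg1, hg2, hg3⟩ := hch
      refine ⟨g (i + 1), ⟨g, rfl, ?_, ?_⟩, ?_⟩
      · intro k h1 h2; exact hg2 k (by omega) (by omega)
      · intro k h1 h2; exact hg3 k (by omega) (by omega)
      · have := hg2 i le_rfl (by omega)
        rwa [hg1] at this
    choose w hw using next
    obtain ⟨q', hq'⟩ := exists_infinite_fiber' w
    refine ⟨q', fun d => ?_, ?_⟩
    · obtain ⟨d', hd'1, hd'2⟩ := hq'.exists_gt d
      have : KChain R A (i + 1) ((i + 1) + d') q' := by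
        have := (hw d').1
        rwa [show w d' = q' from hd'1] at this
      exact trunc this (by omega) (by omega)
    · obtain ⟨d', hd'1, _⟩ := hq'.exists_gt 0
      have := (hw d').2
      rwa [show w d' = q' from hd'1] at this
  let sfun : ∀ i : ℕ, {q : K // q ∈ B i} := fun i =>
    Nat.rec ⟨(hBne 0).choose, (hBne 0).choose_spec⟩
      (fun n prev => ⟨(hBstep n prev.1 prev.2).choose,
        (hBstep n prev.1 prev.2).choose_spec.1⟩) i
  refine ⟨fun i => (sfun i).1, ?_, ?_⟩
  · intro i
    obtain ⟨g, hg1, _, hg3⟩ := (sfun i).2 0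
    have := hg3 i le_rfl (by omega)
    rwa [hg1] at this
  · intro i
    exact (hBstep i (sfun i).1 (sfun i).2).choose_spec.2

end Koenig


/-! ### Part A: entry, resets, and run construction -/

lemma entry_form (x : ℕ → α) {n : ℕ} (hm : IsMain (mrun δ F q₀ x n))
    (hfirst : ∀ m, m < n → ¬ IsMain (mrun δ F q₀ x m)) :
    ∃ D σ p, σ ≤ n ∧ mrun δ F q₀ x n = .inr D ∧ D ∈ Hit δ F (Nst δ F) ∧
      Birth δ F q₀ x σ p ∧ D = wordAct δ F (base {p}) (seg x σ n) := by
  cases n with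
  | zero =>
      have hstep : mrun δ F q₀ x 0 = minit δ F q₀ := rfl
      rw [minit] at hstep
      by_cases hg : GoodC δ F (C0 F q₀)
      · rw [dif_pos hg] at hstep
        obtain ⟨hmem, hHit⟩ := Classical.choose_spec hg
        rcases Set.mem_insert_iff.1 hmem with heq | ⟨q, ⟨hq1, hq2⟩, heq⟩
        · exact ⟨_, 0, q₀, le_refl _, hstep, hHit, Or.inl ⟨rfl, rfl⟩, by rw [heq]; simp⟩
        · refine ⟨_, 0, q, le_refl _, hstep, hHit,
            Or.inr ⟨hq1, by rw [Tx_zero]; exact hq2⟩, by rw [← heq]; simp⟩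
      · rw [dif_neg hg] at hstep
        rw [hstep] at hm
        exact hm.elim
  | succ m =>
      obtain ⟨T, C, hM⟩ : ∃ T C, mrun δ F q₀ x m = .inl (T, C) := by
        rcases hM : mrun δ F q₀ x m with ⟨T, C⟩ | D
        · exact ⟨T, C, rfl⟩
        · exact absurd (by rw [hM]; trivial) (hfirst m (Nat.lt_succ_self m))
      obtain ⟨hinv, _⟩ := mrun_inv δ F q₀ x m
      obtain ⟨hT, _, _, hC4⟩ := hinv T C hM
      have hstep : mrun δ F q₀ x (m+1) = mstep δ F (.inl (T, C)) (x m) := by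
        show mstep δ F (mrun δ F q₀ x m) (x m) = _
        rw [hM]
      rw [mstep] at hstep
      by_cases hg : GoodC δ F (nextC δ F C (reachStep δ T (x m)) (x m))
      · rw [dif_pos hg] at hstep
        obtain ⟨hmem, hHit⟩ := Classical.choose_spec hg
        have hTx : reachStep δ T (x m) = Tx δ F q₀ x (m+1) := by
          rw [hT, ← Tx_succ]
        rcases hmem with ⟨S0, hS0, heq⟩ | ⟨q, ⟨hq1, hq2⟩, heq⟩
        · obtain ⟨σ, hσ, p, hb, rfl⟩ := hC4 S0 hS0
          refine ⟨_, σ, p, by omega, hstep, hHit, hb, ?_⟩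
          rw [← heq, seg_succ x hσ, wordAct_snoc]
        · refine ⟨_, m+1, q, le_refl _, hstep, hHit,
            Or.inr ⟨hq1, by rw [← hTx]; exact hq2⟩, by rw [← heq]; simp⟩
      · rw [dif_neg hg] at hstep
        rw [hstep] at hm
        exact hm.elim

/-- The reset condition on a main-mode state. -/
def ResetCond (D : Set (K × Bool)) (a : α) : Prop :=
  (succs (mhStep δ F D a)).Nonempty ∧ base (succs (mhStep δ F D a)) ∈ Hit δ F (Nst δ F)

lemma mstep_inr_pos {D : Set (K × Bool)} {a : α} (h : ResetCond δ F D a) :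
    mstep δ F (.inr D) a = .inr (base (succs (mhStep δ F D a))) := by
  have h' : (succs (mhStep δ F D a)).Nonempty ∧
      base (succs (mhStep δ F D a)) ∈ Hit δ F (Nst δ F) := h
  rw [mstep, if_pos h']

lemma mstep_inr_neg {D : Set (K × Bool)} {a : α} (h : ¬ ResetCond δ F D a) :
    mstep δ F (.inr D) a = .inr (mhStep δ F D a) := by
  have h' : ¬ ((succs (mhStep δ F D a)).Nonempty ∧
      base (succs (mhStep δ F D a)) ∈ Hit δ F (Nst δ F)) := h
  rw [mstep, if_neg h']

/-- A reset happens at time `k`. -/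
def ResetAt (x : ℕ → α) (k : ℕ) : Prop :=
  ∃ D, mrun δ F q₀ x k = .inr D ∧ ResetCond δ F D (x k)

lemma evol_noreset (x : ℕ → α) {n m : ℕ} (h : n ≤ m) {D : Set (K × Bool)}
    (hD : mrun δ F q₀ x n = .inr D)
    (hnr : ∀ k, n ≤ k → k < m → ¬ ResetAt δ F q₀ x k) :
    mrun δ F q₀ x m = .inr (wordAct δ F D (seg x n m)) := by
  induction m, h using Nat.le_induction with
  | base => simpa using hD
  | succ m hm IH =>
      have hm' : mrun δ F q₀ x m = .inr (wordAct δ F D (seg x n m)) :=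
        IH (fun k h1 h2 => hnr k h1 (by omega))
      have hnc : ¬ ResetCond δ F (wordAct δ F D (seg x n m)) (x m) := by
        intro hc
        exact hnr m hm (by omega) ⟨_, hm', hc⟩
      have : mrun δ F q₀ x (m+1) = mstep δ F (.inr (wordAct δ F D (seg x n m))) (x m) := by
        show mstep δ F (mrun δ F q₀ x m) (x m) = _
        rw [hm']
      rw [this, mstep_inr_neg δ F hnc, seg_succ x hm, wordAct_snoc]

lemma reset_of_follow (x : ℕ → α) {n : ℕ} {D : Set (K × Bool)}
    (hD : mrun δ F q₀ x n = .inr D) (hf : FollowAt δ F q₀ x n) :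
    ∃ k, n ≤ k ∧ ResetAt δ F q₀ x k := by
  by_contra hcon
  push_neg at hcon
  have hDH : D ∈ Hit δ F (Nst δ F) := (mrun_inv δ F q₀ x n).2 D hD
  obtain ⟨hbne, hbHit⟩ := builder_spec δ F hDH
  set v := builder δ F D with hv
  have hvne : v ≠ [] := builder_ne_nil δ F D
  have hvlen : 1 ≤ v.length := List.length_pos_iff.2 hvne
  have hfw : fword δ F (mrun δ F q₀ x n) = v := by rw [hD]; rfl
  rw [FollowAt, hfw] at hf
  have hm' : mrun δ F q₀ x (n + v.length - 1) =
      .inr (wordAct δ F D (seg x n (n + v.length - 1))) :=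
    evol_noreset δ F q₀ x (by omega) hD (fun k h1 h2 => hcon k h1)
  have hkey : mhStep δ F (wordAct δ F D (seg x n (n + v.length - 1)))
      (x (n + v.length - 1)) = wordAct δ F D v := by
    rw [← wordAct_snoc, ← seg_succ x (by omega : n ≤ n + v.length - 1),
      show n + v.length - 1 + 1 = n + v.length by omega, hf]
  have hra : ResetAt δ F q₀ x (n + v.length - 1) := by
    refine ⟨_, hm', ?_⟩
    rw [ResetCond, hkey]
    exact ⟨hbne, hbHit⟩
  exact hcon _ (by omega) hra


lemma splice (x : ℕ → α) (b : ℕ → ℕ) (hblt : ∀ i, b i < b (i+1)) (s : ℕ → K)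
    (pinit : ℕ → K) (hpi0 : pinit 0 = q₀) (hpiend : pinit (b 0) = s 0)
    (hpirun : IsSegRun δ x 0 (b 0) pinit)
    (P : ℕ → ℕ → K) (hP1 : ∀ i, P i (b i) = s i) (hP2 : ∀ i, P i (b (i+1)) = s (i+1))
    (hP3 : ∀ i, IsSegRun δ x (b i) (b (i+1)) (P i))
    (hPF : ∀ i, ∃ τ, b i < τ ∧ τ ≤ b (i+1) ∧ P i τ ∈ F) :
    ∃ r : ℕ → K, r 0 = q₀ ∧ (∀ n, r (n + 1) ∈ δ (r n) (x n)) ∧ {n | r n ∈ F}.Infinite := by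
  classical
  have hbmono : StrictMono b := strictMono_nat_of_lt_succ hblt
  have hbge : ∀ i, i ≤ b i := fun i => hbmono.le_apply
  set idx : ℕ → ℕ := fun n => Nat.findGreatest (fun i => b i ≤ n) n with hidx
  have hidx_eq : ∀ {i n}, b i ≤ n → n < b (i+1) → idx n = i := by
    intro i n h1 h2
    refine le_antisymm ?_ (Nat.le_findGreatest (by have := hbge i; omega) h1)
    by_contra hgt
    push_neg at hgt
    have hP : b (idx n) ≤ n :=
      Nat.findGreatest_spec (P := fun j => b j ≤ n) (m := i) (n := n)
        (by have := hbge i; omega) h1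
    have : b (i+1) ≤ b (idx n) := hbmono.monotone (by omega)
    omega
  have hidx_lohi : ∀ {n}, b 0 ≤ n → b (idx n) ≤ n ∧ n < b (idx n + 1) := by
    intro n h0
    have hP : b (idx n) ≤ n :=
      Nat.findGreatest_spec (P := fun j => b j ≤ n) (m := 0) (n := n) (by omega) h0
    refine ⟨hP, ?_⟩
    by_contra hge
    push_neg at hge
    have h1 : idx n + 1 ≤ n := by have := hbge (idx n + 1); omega
    have := Nat.le_findGreatest (P := fun j => b j ≤ n) h1 hge
    have h3 : Nat.findGreatest (fun j => b j ≤ n) n = idx n := rfl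
    omega
  set r : ℕ → K := fun n => if n < b 0 then pinit n else P (idx n) n with hr
  have vA : ∀ i n, b i ≤ n → n < b (i+1) → r n = P i n := by
    intro i n h1 h2
    have h0 : b 0 ≤ n := le_trans (hbmono.monotone (Nat.zero_le i)) h1
    rw [hr]
    simp only [not_lt.2 h0, if_neg, if_false]
    rw [hidx_eq h1 h2]
  have vB : ∀ i, r (b i) = s i := by
    intro i
    rw [vA i (b i) (le_refl _) (hblt i), hP1]
  refine ⟨r, ?_, ?_, ?_⟩
  · rcases Nat.eq_zero_or_pos (b 0) with h0 | h0
    · rw [show (0:ℕ) = b 0 from h0.symm, vB, ← hpiend, h0, hpi0]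
    · rw [hr]
      simp only [h0, if_pos]
      exact hpi0
  · intro n
    rcases Nat.lt_or_ge (n + 1) (b 0) with hc1 | hc1
    · have hn : n < b 0 := by omega
      rw [hr]
      simp only [hn, hc1, if_pos]
      exact hpirun n (Nat.zero_le n) hn
    · rcases Nat.eq_or_lt_of_le hc1 with hc2 | hc2
      · -- n + 1 = b 0
        have hn : n < b 0 := by omega
        have e1 : r n = pinit n := by rw [hr]; simp only [hn, if_pos]
        have e2 : r (n+1) = pinit (n+1) := by
          rw [show n + 1 = b 0 from hc2.symm, vB, ← hpiend]
        rw [e1, e2]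
        exact hpirun n (Nat.zero_le n) hn
      · -- b 0 ≤ n
        have h0 : b 0 ≤ n := by omega
        obtain ⟨h1, h2⟩ := hidx_lohi h0
        set i := idx n with hi
        have e1 : r n = P i n := vA i n h1 h2
        rcases Nat.lt_or_ge (n+1) (b (i+1)) with hc3 | hc3
        · have e2 : r (n+1) = P i (n+1) := vA i (n+1) (by omega) hc3
          rw [e1, e2]
          exact hP3 i n h1 h2
        · have hn1 : n + 1 = b (i+1) := by omega
          have e2 : r (n+1) = P i (n+1) := by
            rw [hn1, vB, ← hP2]
          rw [e1, e2]
          exact hP3 i n h1 h2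
  · apply infinite_of_unbounded
    intro N
    obtain ⟨τ, hτ1, hτ2, hτ3⟩ := hPF N
    refine ⟨τ, by have := hbge N; omega, ?_⟩
    rcases Nat.lt_or_ge τ (b (N+1)) with hc | hc
    · have : r τ = P N τ := vA N τ (by omega) hc
      rw [Set.mem_setOf_eq, this]
      exact hτ3
    · have hτb : τ = b (N+1) := by omega
      have : r τ = P N τ := by
        rw [hτb, vB, ← hP2]
      rw [Set.mem_setOf_eq, this]
      exact hτ3

theorem partA (x : ℕ → α) (hmain : ∃ n, IsMain (mrun δ F q₀ x n))
    (hgen : GenericX δ F q₀ x) :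
    ∃ r : ℕ → K, r 0 = q₀ ∧ (∀ n, r (n + 1) ∈ δ (r n) (x n)) ∧ {n | r n ∈ F}.Infinite := by
  classical
  obtain ⟨D₀, σ₀, p₀, hσ₀, hD₀run, hD₀Hit, hbirth, hD₀form⟩ :=
    entry_form δ F q₀ x (Nat.find_spec hmain) (fun m hm => Nat.find_min hmain hm)
  set n₀ := Nat.find hmain with hn₀
  -- resets are unbounded
  have hub : ∀ N, ∃ k, N ≤ k ∧ ResetAt δ F q₀ x k := by
    intro N
    obtain ⟨n, hn1, hn2⟩ := hgen (max N n₀)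
    obtain ⟨D, hD⟩ : ∃ D, mrun δ F q₀ x n = .inr D := by
      have : IsMain (mrun δ F q₀ x n) :=
        main_absorbing δ F q₀ x (le_trans (le_max_right _ _) hn1) (Nat.find_spec hmain)
      rcases hM : mrun δ F q₀ x n with ⟨T, C⟩ | D
      · rw [hM] at this; exact this.elim
      · exact ⟨D, rfl⟩
    obtain ⟨k, hk1, hk2⟩ := reset_of_follow δ F q₀ x hD hn2
    exact ⟨k, by omega, hk2⟩
  -- no main before n₀, so no resets before n₀
  have hreset_ge : ∀ k, ResetAt δ F q₀ x k → n₀ ≤ k := by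
    intro k hres
    by_contra hlt
    obtain ⟨D, hD, -⟩ := hres
    exact Nat.find_min hmain (show k < Nat.find hmain by omega) (by rw [hD]; trivial)
  -- the consecutive sequence of reset times
  have hne0 : ∃ k, ResetAt δ F q₀ x k := by
    obtain ⟨k, _, hk⟩ := hub 0; exact ⟨k, hk⟩
  have hne0' : {k | ResetAt δ F q₀ x k}.Nonempty := hne0
  have hnext : ∀ prev : ℕ, {k | prev < k ∧ ResetAt δ F q₀ x k}.Nonempty := by
    intro prev
    obtain ⟨k, h1, h2⟩ := hub (prev + 1)
    exact ⟨k, by omega, h2⟩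
  let t : ℕ → ℕ := fun i => Nat.rec (sInf {k | ResetAt δ F q₀ x k})
    (fun _ prev => sInf {k | prev < k ∧ ResetAt δ F q₀ x k}) i
  have ht0res : ResetAt δ F q₀ x (t 0) := Nat.sInf_mem hne0'
  have ht0min : ∀ k, k < t 0 → ¬ ResetAt δ F q₀ x k := fun k hk =>
    Nat.notMem_of_lt_sInf hk
  have htsucc : ∀ i, t i < t (i+1) ∧ ResetAt δ F q₀ x (t (i+1)) ∧
      ∀ k, t i < k → k < t (i+1) → ¬ ResetAt δ F q₀ x k := by
    intro i
    have heq : t (i+1) = sInf {k | t i < k ∧ ResetAt δ F q₀ x k} := rfl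
    refine ⟨?_, ?_, ?_⟩
    · rw [heq]; exact (Nat.sInf_mem (hnext (t i))).1
    · rw [heq]; exact (Nat.sInf_mem (hnext (t i))).2
    · intro k h1 h2
      rw [heq] at h2
      intro hres
      exact Nat.notMem_of_lt_sInf h2 ⟨h1, hres⟩
  have ht0ge : n₀ ≤ t 0 := hreset_ge _ ht0res
  -- anchor times
  let b : ℕ → ℕ := fun i => match i with
    | 0 => σ₀
    | i' + 1 => t i' + 1
  have hblt : ∀ i, b i < b (i+1) := by
    intro i
    cases i with
    | zero => show σ₀ < t 0 + 1; omega
    | succ i' => show t i' + 1 < t (i'+1) + 1; have := (htsucc i').1; omega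
  -- anchor sets
  let A : ℕ → Set K := fun i => Nat.rec {p₀}
    (fun i' prev => succs (wordAct δ F (base prev) (seg x (b i') (b (i'+1))))) i
  have hA0 : A 0 = {p₀} := rfl
  have hAsucc : ∀ i, A (i+1) = succs (wordAct δ F (base (A i)) (seg x (b i) (b (i+1)))) :=
    fun i => rfl
  -- machine carries base of anchors at anchor times, and anchors are nonempty
  have hmach : ∀ i, mrun δ F q₀ x (b (i+1)) = .inr (base (A (i+1))) ∧ (A (i+1)).Nonempty := by
    intro i
    induction i with
    | zero =>
        obtain ⟨D', hD', hcond⟩ := ht0res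
        have hev : mrun δ F q₀ x (t 0) = .inr (wordAct δ F D₀ (seg x n₀ (t 0))) :=
          evol_noreset δ F q₀ x ht0ge hD₀run (fun k h1 h2 => ht0min k h2)
        have hD'eq : D' = wordAct δ F D₀ (seg x n₀ (t 0)) :=
          Sum.inr_injective (hD'.symm.trans hev)
        have hDval : wordAct δ F D₀ (seg x n₀ (t 0)) =
            wordAct δ F (base {p₀}) (seg x σ₀ (t 0)) := by
          rw [hD₀form, ← wordAct_append, seg_append x hσ₀ ht0ge]
        have hstep : mrun δ F q₀ x (t 0 + 1) =
            .inr (base (succs (mhStep δ F D' (x (t 0))))) := by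
          show mstep δ F (mrun δ F q₀ x (t 0)) (x (t 0)) = _
          rw [hev, ← hD'eq, mstep_inr_pos δ F hcond]
        have hkey : mhStep δ F D' (x (t 0)) =
            wordAct δ F (base {p₀}) (seg x σ₀ (t 0 + 1)) := by
          rw [hD'eq, hDval, ← wordAct_snoc, ← seg_succ x (by omega : σ₀ ≤ t 0)]
        constructor
        · rw [hAsucc 0, hA0]
          show mrun δ F q₀ x (t 0 + 1) = _
          rw [hstep, hkey]
          rfl
        · rw [hAsucc 0, hA0]
          have := hcond.1
          rw [hkey] at this
          exact this
    | succ i IH =>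
        obtain ⟨IH1, IH2⟩ := IH
        obtain ⟨hlt, hres, hmin⟩ := htsucc i
        obtain ⟨D', hD', hcond⟩ := hres
        have hble : b (i+1) ≤ t (i+1) := by show t i + 1 ≤ t (i+1); omega
        have hev : mrun δ F q₀ x (t (i+1)) =
            .inr (wordAct δ F (base (A (i+1))) (seg x (b (i+1)) (t (i+1)))) :=
          evol_noreset δ F q₀ x hble IH1
            (fun k h1 h2 => hmin k (by have h1' : t i + 1 ≤ k := h1; omega) h2)
        have hD'eq : D' = wordAct δ F (base (A (i+1))) (seg x (b (i+1)) (t (i+1))) :=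
          Sum.inr_injective (hD'.symm.trans hev)
        have hstep : mrun δ F q₀ x (t (i+1) + 1) =
            .inr (base (succs (mhStep δ F D' (x (t (i+1)))))) := by
          show mstep δ F (mrun δ F q₀ x (t (i+1))) (x (t (i+1))) = _
          rw [hev, ← hD'eq, mstep_inr_pos δ F hcond]
        have hkey : mhStep δ F D' (x (t (i+1))) =
            wordAct δ F (base (A (i+1))) (seg x (b (i+1)) (t (i+1) + 1)) := by
          rw [hD'eq, ← wordAct_snoc, ← seg_succ x hble]
        constructor
        · rw [hAsucc (i+1)]
          show mrun δ F q₀ x (t (i+1) + 1) = _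
          rw [hstep, hkey]
        · rw [hAsucc (i+1)]
          have := hcond.1
          rw [hkey] at this
          exact this
  have hAne : ∀ i, (A i).Nonempty := by
    intro i
    cases i with
    | zero => exact ⟨p₀, rfl⟩
    | succ i' => exact (hmach i').2
  -- links
  have hlink : ∀ i, ∀ q' ∈ A (i+1), ∃ q ∈ A i,
      (∃ p : ℕ → K, p (b i) = q ∧ p (b (i+1)) = q' ∧
        IsSegRun δ x (b i) (b (i+1)) p ∧ ∃ τ, b i < τ ∧ τ ≤ b (i+1) ∧ p τ ∈ F) := by
    intro i q' hq'
    rw [hAsucc i] at hq'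
    obtain ⟨p, hp1, hp2, hp3, hp4⟩ :=
      (mem_succs_wordAct_base_iff x (le_of_lt (hblt i)) (A i) q').1 hq'
    exact ⟨p (b i), hp1, p, rfl, hp2, hp3, hp4⟩
  obtain ⟨s, hsA, hsR⟩ := koenig hAne hlink
  -- initial path
  have hp₀Tx : p₀ ∈ Tx δ F q₀ x σ₀ := by
    rcases hbirth with ⟨h1, h2⟩ | ⟨_, h2⟩
    · subst h1; subst h2; rw [Tx_zero]; rfl
    · exact h2
  obtain ⟨pinit, hpi1, hpi2, hpi3⟩ := (mem_Tx_iff δ F q₀ x σ₀ p₀).1 hp₀Tx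
  have hs0 : s 0 = p₀ := hsA 0
  choose P hP1 hP2 hP3 hPF using hsR
  exact splice δ F q₀ x b hblt s pinit hpi1 (by rw [hpi2, hs0]) hpi3 P hP1 hP2 hP3 hPF


/-! ### The diagonal word -/

noncomputable def diag : List (Mst α K) → List α → List α
  | [], acc => acc
  | m :: r, acc => diag r (acc ++ fword δ F (mword δ F m acc))

lemma diag_extends : ∀ (l : List (Mst α K)) (acc : List α), ∃ w, diag δ F l acc = acc ++ w := by
  intro l
  induction l with
  | nil => intro acc; exact ⟨[], by simp [diag]⟩
  | cons m r IH =>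
      intro acc
      obtain ⟨w, hw⟩ := IH (acc ++ fword δ F (mword δ F m acc))
      exact ⟨fword δ F (mword δ F m acc) ++ w, by rw [diag, hw, List.append_assoc]⟩

lemma diag_spec : ∀ (l : List (Mst α K)) (acc : List α), ∀ m ∈ l,
    ∃ w₁ w₂, diag δ F l acc = w₁ ++ fword δ F (mword δ F m w₁) ++ w₂ := by
  intro l
  induction l with
  | nil => intro acc m hm; cases hm
  | cons m0 r IH =>
      intro acc m hm
      rcases List.mem_cons.1 hm with rfl | hm
      · obtain ⟨w, hw⟩ := diag_extends δ F r (acc ++ fword δ F (mword δ F m acc))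
        exact ⟨acc, w, by rw [diag, hw, List.append_assoc]⟩
      · exact IH (acc ++ fword δ F (mword δ F m0 acc)) m hm

/-- The list of all machine states. -/
noncomputable def mAll : List (Mst α K) :=
  (Set.toFinite (Set.univ : Set (Mst α K))).toFinset.toList

lemma mem_mAll (m : Mst α K) : m ∈ mAll (α := α) (K := K) := by
  rw [mAll, Finset.mem_toList, Set.Finite.mem_toFinset]
  trivial

/-- The diagonal word: wherever it occurs, the strategy is followed somewhere inside it. -/
noncomputable def w0 : List α := diag δ F (mAll (α := α) (K := K)) []

lemma w0_ne_nil : w0 (K := K) δ F ≠ [] := by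
  obtain ⟨w₁, w₂, hw⟩ := diag_spec δ F (mAll (α := α) (K := K)) []
    (Sum.inr ∅) (mem_mAll _)
  have hw0 : w0 (K := K) δ F = w₁ ++ fword δ F (mword δ F (Sum.inr ∅) w₁) ++ w₂ := hw
  rw [hw0]
  intro h
  rcases List.append_eq_nil_iff.1 h with ⟨h1, -⟩
  rcases List.append_eq_nil_iff.1 h1 with ⟨-, h2⟩
  exact fword_ne_nil δ F _ h2

/-- An occurrence of the diagonal word at position `p`. -/
def OccAt (x : ℕ → α) (p : ℕ) : Prop :=
  seg x p (p + (w0 (K := K) δ F).length) = w0 δ F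

lemma follow_of_occ (x : ℕ → α) (p : ℕ) (h : OccAt δ F x p) :
    ∃ d, FollowAt δ F q₀ x (p + d) := by
  obtain ⟨w₁, w₂, hw⟩ := diag_spec δ F (mAll (α := α) (K := K)) []
    (mrun δ F q₀ x p) (mem_mAll _)
  have hw0 : w0 (K := K) δ F =
      w₁ ++ fword δ F (mword δ F (mrun δ F q₀ x p) w₁) ++ w₂ := hw
  rw [OccAt, hw0, List.append_assoc] at h
  obtain ⟨h1, h2⟩ := seg_split h
  obtain ⟨h3, -⟩ := seg_split h2
  have hmw : mrun δ F q₀ x (p + w₁.length) = mword δ F (mrun δ F q₀ x p) w₁ := by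
    rw [mrun_eq_mword δ F q₀ x (show p ≤ p + w₁.length by omega), h1]
  refine ⟨w₁.length, ?_⟩
  rw [FollowAt, hmw]
  exact h3

lemma generic_of_io_occ (x : ℕ → α) (h : ∀ N, ∃ p, N ≤ p ∧ OccAt δ F x p) :
    GenericX δ F q₀ x := by
  intro N
  obtain ⟨p, hp1, hp2⟩ := h N
  obtain ⟨d, hd⟩ := follow_of_occ δ F q₀ x p hp2
  exact ⟨p + d, by omega, hd⟩


/-! ### The open set `O` and its automaton -/

/-- The open set: the machine eventually enters main mode. -/
def OSet : Set (ℕ → α) := {x | ∃ n, IsMain (mrun δ F q₀ x n)}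

lemma mrun_congr {x y : ℕ → α} {n : ℕ} (h : ∀ i, i < n → y i = x i) :
    mrun δ F q₀ y n = mrun δ F q₀ x n := by
  induction n with
  | zero => rfl
  | succ n IH =>
      show mstep δ F (mrun δ F q₀ y n) (y n) = mstep δ F (mrun δ F q₀ x n) (x n)
      rw [IH (fun i hi => h i (by omega)), h n (by omega)]

section Topo

variable [TopologicalSpace α] [DiscreteTopology α]

lemma isOpen_cyl (x : ℕ → α) (n : ℕ) : IsOpen {y : ℕ → α | ∀ i, i < n → y i = x i} := by
  have : {y : ℕ → α | ∀ i, i < n → y i = x i} =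
      ⋂ i : Fin n, (fun y : ℕ → α => y (i : ℕ)) ⁻¹' {x (i : ℕ)} := by
    ext y
    simp only [Set.mem_setOf_eq, Set.mem_iInter, Set.mem_preimage, Set.mem_singleton_iff]
    constructor
    · intro h i; exact h i i.2
    · intro h i hi; exact h ⟨i, hi⟩
  rw [this]
  exact isOpen_iInter_of_finite fun i =>
    (continuous_apply (i : ℕ)).isOpen_preimage _ (isOpen_discrete _)

lemma isOpen_OSet : IsOpen (OSet δ F q₀ : Set (ℕ → α)) := by
  rw [isOpen_iff_forall_mem_open]
  rintro x ⟨n, hn⟩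
  refine ⟨{y | ∀ i, i < n → y i = x i}, ?_, isOpen_cyl x n, fun i _ => rfl⟩
  intro y hy
  exact ⟨n, by rw [mrun_congr δ F q₀ hy]; exact hn⟩

end Topo

/-- The transition function of the automaton recognizing `OSet`. -/
def delB : Mst α K → α → Set (Mst α K) := fun m a => {mstep δ F m a}

lemma langB (x : ℕ → α) :
    x ∈ nbaLang (delB δ F) (minit δ F q₀) {m : Mst α K | IsMain m} ↔ x ∈ OSet δ F q₀ := by
  constructor
  · rintro ⟨r, h0, hs, hinf⟩
    have hr : ∀ n, r n = mrun δ F q₀ x n := by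
      intro n
      induction n with
      | zero => exact h0
      | succ n IH =>
          have := hs n
          rw [delB, Set.mem_singleton_iff] at this
          rw [this, IH]
          rfl
    obtain ⟨n, hn⟩ := hinf.nonempty
    rw [Set.mem_setOf_eq, hr n] at hn
    exact ⟨n, hn⟩
  · rintro ⟨n, hn⟩
    refine ⟨mrun δ F q₀ x, rfl, fun k => rfl, ?_⟩
    apply infinite_of_unbounded
    intro N
    refine ⟨max N n, by omega, ?_⟩
    exact main_absorbing δ F q₀ x (le_max_right N n) hn

/-! ### Occurrence sets and their topology -/

/-- No occurrence of the diagonal word from position `m` on. -/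
def Cset (m : ℕ) : Set (ℕ → α) := {x | ∀ p, m ≤ p → ¬ OccAt δ F x p}

lemma seg_congr {x y : ℕ → α} {t m : ℕ} (h : ∀ i, t ≤ i → i < m → y i = x i) :
    seg y t m = seg x t m := by
  simp only [seg]
  apply List.map_congr_left
  intro i hi
  rw [List.mem_range'_1] at hi
  exact h i hi.1 (by omega)

lemma occAt_congr {x y : ℕ → α} {p : ℕ}
    (h : ∀ i, i < p + (w0 (K := K) δ F).length → y i = x i) :
    OccAt δ F x p ↔ OccAt δ F y p := by
  rw [OccAt, OccAt, seg_congr (fun i h1 h2 => h i h2)]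

section Topo2

variable [TopologicalSpace α] [DiscreteTopology α]

lemma isClosed_Cset (m : ℕ) : IsClosed (Cset (K := K) δ F m) := by
  rw [← isOpen_compl_iff, isOpen_iff_forall_mem_open]
  intro x hx
  rw [Set.mem_compl_iff, Cset, Set.mem_setOf_eq] at hx
  push_neg at hx
  obtain ⟨p, hp1, hp2⟩ := hx
  refine ⟨{y | ∀ i, i < p + (w0 (K := K) δ F).length → y i = x i}, ?_,
    isOpen_cyl x _, fun i _ => rfl⟩
  intro y hy
  rw [Set.mem_compl_iff, Cset, Set.mem_setOf_eq]
  push_neg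
  exact ⟨p, hp1, (occAt_congr δ F hy).1 hp2⟩

lemma seg_getElem (x : ℕ → α) {t m i : ℕ} (h : i < m - t) :
    (seg x t m)[i]'(by simpa using h) = x (t + i) := by
  simp only [seg, List.getElem_map, List.getElem_range']
  congr 1
  omega

lemma interior_Cset (m : ℕ) [Nonempty α] : interior (Cset (K := K) δ F m) = ∅ := by
  by_contra hne
  obtain ⟨x, hx⟩ := Set.nonempty_iff_ne_empty.2 hne
  have hU : Cset (K := K) δ F m ∈ nhds x := mem_interior_iff_mem_nhds.1 hx
  obtain ⟨U, hUC, hUo, hxU⟩ := mem_nhds_iff.1 hU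
  obtain ⟨I, u, hu, hpi⟩ := isOpen_pi_iff.1 hUo x hxU
  set W := (w0 (K := K) δ F).length with hW
  have hWpos : 0 < W := List.length_pos_iff.2 (w0_ne_nil δ F)
  set M := (I.sup id) + m + 1 with hM
  have hMgt : ∀ i ∈ I, i < M := by
    intro i hi
    have h2 : i ≤ I.sup id := Finset.le_sup (f := id) hi
    omega
  set y : ℕ → α := fun i => if h : M ≤ i ∧ i < M + W then
    (w0 (K := K) δ F)[i - M]'(by omega) else x i with hy
  have hyI : ∀ i ∈ I, y i = x i := by
    intro i hi
    rw [hy]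
    have := hMgt i hi
    simp only [dif_neg (by omega : ¬ (M ≤ i ∧ i < M + W))]
  have hyU : y ∈ U := by
    apply hpi
    rw [Set.mem_pi]
    intro i hi
    rw [hyI i hi]
    exact (hu i hi).2
  have hyC : y ∈ Cset (K := K) δ F m := hUC hyU
  have hocc : OccAt δ F y M := by
    rw [OccAt]
    apply List.ext_getElem
    · simp
    · intro i h1 h2
      have hiW : i < W := h2
      rw [seg_getElem y (by simpa using h1)]
      rw [hy]
      simp only [dif_pos (show M ≤ M + i ∧ M + i < M + W by omega)]
      congr 1
      omega
  exact hyC M (by omega) hocc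

end Topo2


/-! ### The automaton recognizing "only finitely many occurrences" -/

section WAut

variable {β : Type*}

/-- States: pre-mode, or a window of recently read letters. -/
abbrev WState (β : Type*) (W : ℕ) := Unit ⊕ {l : List β // l.length < W}

instance finiteWState [Fintype β] (W : ℕ) : Finite (WState β W) := by
  have : Finite {l : List β // l.length < W} := by
    apply Finite.of_injective (fun l => (fun i : Fin W => l.1[(i : ℕ)]? : Fin W → Option β))
    intro l1 l2 heq
    apply Subtype.ext
    apply List.ext_getElem?
    intro i
    rcases Nat.lt_or_ge i W with hi | hi
    · exact congrFun heq ⟨i, hi⟩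
    · rw [List.getElem?_eq_none (le_trans (le_of_lt l1.2) hi),
        List.getElem?_eq_none (le_trans (le_of_lt l2.2) hi)]
  unfold WState
  infer_instance

/-- Window update; `none` means an occurrence of `w` was completed. -/
noncomputable def wstep (w l : List β) (a : β) : Option (List β) :=
  if l.length + 1 = w.length then
    (if l ++ [a] = w then none else some ((l ++ [a]).drop 1))
  else some (l ++ [a])

/-- The transition function of the occurrence automaton. -/
noncomputable def delC (w : List β) (hw : 0 < w.length) :
    WState β w.length → β → Set (WState β w.length)
  | .inl _, _ => {Sum.inl (), Sum.inr ⟨[], by simpa using hw⟩}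
  | .inr l, a => {s' | ∃ (l' : List β) (h : l'.length < w.length),
      wstep w l.1 a = some l' ∧ s' = Sum.inr ⟨l', h⟩}

/-- The canonical window at time `n` for entry time `m`. -/
def winw (x : ℕ → β) (V m n : ℕ) : List β := seg x (n - min (n - m) V) n

lemma winw_length (x : ℕ → β) (V m n : ℕ) : (winw x V m n).length = min (n - m) V := by
  rw [winw, seg_length]
  omega

lemma winw_self (x : ℕ → β) (V m : ℕ) : winw x V m m = [] := by
  rw [winw]
  simp

lemma seg_cons (x : ℕ → β) {t n : ℕ} (h : t < n) :
    seg x t n = x t :: seg x (t + 1) n := by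
  have h1 := seg_append x (show t ≤ t + 1 by omega) (show t + 1 ≤ n by omega)
  have h2 : seg x t (t + 1) = [x t] := by
    rw [seg_succ x (le_refl t), seg_self]
    rfl
  rw [← h1, h2]
  rfl

lemma winw_rec1 (x : ℕ → β) {V m n : ℕ} (hmn : m ≤ n) (h : n - m < V) :
    winw x V m (n + 1) = winw x V m n ++ [x n] := by
  rw [winw, winw]
  have e1 : n - min (n - m) V = m := by omega
  have e2 : n + 1 - min (n + 1 - m) V = m := by omega
  rw [e1, e2]
  exact seg_succ x hmn

lemma winw_rec2 (x : ℕ → β) {V m n : ℕ} (hmn : m ≤ n) (h : V ≤ n - m) :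
    winw x V m (n + 1) = (winw x V m n ++ [x n]).drop 1 := by
  rw [winw, winw]
  have e1 : n - min (n - m) V = n - V := by omega
  have e2 : n + 1 - min (n + 1 - m) V = (n - V) + 1 := by omega
  rw [e1, e2, ← seg_succ x (show n - V ≤ n by omega)]
  rw [seg_cons x (show n - V < n + 1 by omega)]
  simp

lemma winw_full (x : ℕ → β) {V m n : ℕ} (hmn : m ≤ n) (h : V ≤ n - m) :
    winw x V m n ++ [x n] = seg x (n - V) (n + 1) := by
  rw [winw]
  have e1 : n - min (n - m) V = n - V := by omega
  rw [e1, ← seg_succ x (show n - V ≤ n by omega)]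

lemma langC (w : List β) (hw : 0 < w.length) (x : ℕ → β) :
    x ∈ nbaLang (delC w hw) (Sum.inl ())
        {s : WState β w.length | ∃ l, s = Sum.inr l} ↔
      ∃ m, ∀ p, m ≤ p → seg x p (p + w.length) ≠ w := by
  set V := w.length - 1 with hV
  constructor
  · rintro ⟨r, h0, hs, hinf⟩
    have hne : {n | ∃ l, r n = Sum.inr l}.Nonempty := by
      obtain ⟨n, hn⟩ := hinf.nonempty
      exact ⟨n, hn⟩
    set m := sInf {n | ∃ l, r n = Sum.inr l} with hm
    have hmmem : ∃ l, r m = Sum.inr l := Nat.sInf_mem hne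
    have hmmin : ∀ k, k < m → ¬ ∃ l, r k = Sum.inr l := fun k hk =>
      Nat.notMem_of_lt_sInf hk
    have hm1 : 1 ≤ m := by
      by_contra hm0
      obtain ⟨l, hl⟩ := hmmem
      have hmz : m = 0 := by omega
      rw [hmz, h0] at hl
      cases hl
    have hlen : ∀ n, (winw x V m n).length < w.length := by
      intro n
      rw [winw_length]
      omega
    have hwin : ∀ n, m ≤ n → r n = Sum.inr ⟨winw x V m n, hlen n⟩ := by
      intro n hn
      induction n, hn using Nat.le_induction with
      | base =>
          obtain ⟨l, hl⟩ := hmmem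
          have hpre : r (m - 1) = Sum.inl () := by
            rcases hr : r (m - 1) with u | l'
            · cases u; rfl
            · exact absurd ⟨l', hr⟩ (hmmin (m - 1) (by omega))
          have hmem := hs (m - 1)
          rw [show m - 1 + 1 = m by omega, hpre] at hmem
          simp only [delC, Set.mem_insert_iff, Set.mem_singleton_iff] at hmem
          rcases hmem with hmem | hmem
          · rw [hmem] at hl
            cases hl
          · rw [hmem]
            congr 1
            apply Subtype.ext
            show ([] : List β) = winw x V m m
            rw [winw_self]
      | succ n hn IH =>
          have hmem := hs n
          rw [IH] at hmem
          simp only [delC, Set.mem_setOf_eq] at hmem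
          obtain ⟨l', h', hws, heq⟩ := hmem
          rw [wstep] at hws
          split at hws
          case isTrue hfull =>
            have hfull' : V ≤ n - m := by
              have := winw_length x V m n
              omega
            split at hws
            case isTrue => cases hws
            case isFalse hocc =>
              rw [heq]
              congr 1
              apply Subtype.ext
              injection hws with hws
              show l' = winw x V m (n + 1)
              rw [← hws, winw_rec2 x hn hfull']
          case isFalse hfull =>
            have hfull' : n - m < V := by
              have h1 := winw_length x V m n
              have h2 := hlen n
              omega
            rw [heq]
            congr 1
            apply Subtype.ext
            injection hws with hws
            show l' = winw x V m (n + 1)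
            rw [← hws, winw_rec1 x hn hfull']
    refine ⟨m, ?_⟩
    intro p hp hocc
    set n := p + V with hn
    have hnm : m ≤ n := by omega
    have hfull' : V ≤ n - m := by omega
    have hmem := hs n
    rw [hwin n hnm] at hmem
    simp only [delC, Set.mem_setOf_eq] at hmem
    obtain ⟨l', h', hws, heq⟩ := hmem
    rw [wstep] at hws
    have hfull : (winw x V m n).length + 1 = w.length := by
      rw [winw_length]
      omega
    rw [if_pos hfull] at hws
    have hocc' : winw x V m n ++ [x n] = w := by
      rw [winw_full x hnm hfull']
      have e1 : n - V = p := by omega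
      rw [e1, show n + 1 = p + w.length by omega]
      exact hocc
    rw [if_pos hocc'] at hws
    cases hws
  · rintro ⟨m, hm⟩
    have hm' : ∀ p, m + 1 ≤ p → seg x p (p + w.length) ≠ w := fun p hp => hm p (by omega)
    set M := m + 1 with hM
    have hlen : ∀ n, (winw x V M n).length < w.length := by
      intro n
      rw [winw_length]
      omega
    refine ⟨fun n => if n < M then Sum.inl () else Sum.inr ⟨winw x V M n, hlen n⟩,
      ?_, ?_, ?_⟩
    · simp only [if_pos (show 0 < M by omega)]
    · intro n
      rcases Nat.lt_or_ge (n + 1) M with hc1 | hc1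
      · simp only [if_pos (show n < M by omega), if_pos hc1]
        simp only [delC, Set.mem_insert_iff]
        left
        trivial
      · rcases Nat.eq_or_lt_of_le hc1 with hc2 | hc2
        · simp only [if_pos (show n < M by omega), if_neg (show ¬ (n + 1 < M) by omega)]
          simp only [delC, Set.mem_insert_iff, Set.mem_singleton_iff]
          right
          congr 1
          apply Subtype.ext
          show winw x V M (n + 1) = ([] : List β)
          rw [← hc2, winw_self]
        · have hMn : M ≤ n := by omega
          simp only [if_neg (show ¬ (n < M) by omega), if_neg (show ¬ (n + 1 < M) by omega)]
          simp only [delC, Set.mem_setOf_eq]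
          refine ⟨winw x V M (n + 1), hlen (n + 1), ?_, rfl⟩
          rw [wstep]
          rcases Nat.lt_or_ge (n - M) V with hsm | hsm
          · rw [if_neg (by rw [winw_length]; omega)]
            rw [winw_rec1 x hMn hsm]
          · rw [if_pos (by rw [winw_length]; omega)]
            have hocc : ¬ (winw x V M n ++ [x n] = w) := by
              rw [winw_full x hMn hsm]
              have h1 : M ≤ n - V := by omega
              have h2 : n + 1 = (n - V) + w.length := by omega
              rw [h2]
              exact hm' (n - V) h1
            rw [if_neg hocc, winw_rec2 x hMn hsm]
    · apply infinite_of_unbounded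
      intro N
      refine ⟨max N M, by omega, ?_⟩
      simp only [Set.mem_setOf_eq, if_neg (show ¬ (max N M < M) by omega)]
      exact ⟨_, rfl⟩

end WAut


/-! ### Transport along an equivalence of state spaces -/

lemma nbaLang_equiv {β K1 K2 : Type*} (e : K1 ≃ K2) (δ' : K1 → β → Set K1) (q' : K1)
    (F' : Set K1) :
    nbaLang (fun s a => e '' δ' (e.symm s) a) (e q') (e '' F') = nbaLang δ' q' F' := by
  ext x
  constructor
  · rintro ⟨r, h0, hs, hinf⟩
    refine ⟨fun n => e.symm (r n), by show e.symm (r 0) = q'; rw [h0]; simp, ?_, ?_⟩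
    · intro n
      show e.symm (r (n + 1)) ∈ δ' (e.symm (r n)) (x n)
      obtain ⟨q, hq, hq2⟩ := hs n
      have heq : e.symm (r (n + 1)) = q := by rw [← hq2]; simp
      rw [heq]
      exact hq
    · show {n | e.symm (r n) ∈ F'}.Infinite
      have hset : {n | e.symm (r n) ∈ F'} = {n | r n ∈ e '' F'} := by
        ext n
        simp only [Set.mem_setOf_eq]
        exact (Set.mem_image_equiv).symm
      rw [hset]
      exact hinf
  · rintro ⟨r, h0, hs, hinf⟩
    refine ⟨fun n => e (r n), by show e (r 0) = e q'; rw [h0], ?_, ?_⟩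
    · intro n
      show e (r (n + 1)) ∈ e '' δ' (e.symm (e (r n))) (x n)
      exact ⟨r (n + 1), by simpa using hs n, rfl⟩
    · show {n | e (r n) ∈ e '' F'}.Infinite
      have hset : {n | e (r n) ∈ e '' F'} = {n | r n ∈ F'} := by
        ext n
        simp only [Set.mem_setOf_eq, Set.mem_image_equiv, Equiv.symm_apply_apply]
      rw [hset]
      exact hinf

end ABP

open ABP in
theorem automatic_baire_property
    {α : Type*} [Fintype α] [Nonempty α] [TopologicalSpace α] [DiscreteTopology α]
    {K : Type*} [Fintype K] (δ : K → α → Set K) (q₀ : K) (F : Set K)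
    (L : Set (ℕ → α)) (hL : L = nbaLang δ q₀ F) :
    ∃ (K₁ : Type) (_ : Fintype K₁) (δ₁ : K₁ → α → Set K₁) (q₁ : K₁) (F₁ : Set K₁)
      (K₂ : Type) (_ : Fintype K₂) (δ₂ : K₂ → α → Set K₂) (q₂ : K₂) (F₂ : Set K₂),
      IsOpen (nbaLang δ₁ q₁ F₁) ∧
      (∃ C : ℕ → Set (ℕ → α), (∀ n, IsClosed (C n) ∧ interior (C n) = ∅) ∧
        nbaLang δ₂ q₂ F₂ = ⋃ n, C n) ∧
      symmDiff L (nbaLang δ₁ q₁ F₁) ⊆ nbaLang δ₂ q₂ F₂ := by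
  classical
  subst hL
  haveI : Fintype (Mst α K) := Fintype.ofFinite _
  have hW : 0 < (w0 (K := K) δ F).length := List.length_pos_iff.2 (w0_ne_nil δ F)
  haveI : Fintype (WState α (w0 (K := K) δ F).length) := Fintype.ofFinite _
  set e1 := Fintype.equivFin (Mst α K) with he1
  set e2 := Fintype.equivFin (WState α (w0 (K := K) δ F).length) with he2
  have lang1 : nbaLang (fun s a => e1 '' delB δ F (e1.symm s) a) (e1 (minit δ F q₀))
      (e1 '' {m | IsMain m}) = OSet δ F q₀ := by
    rw [nbaLang_equiv]
    ext x
    exact langB δ F q₀ x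
  have lang2 : nbaLang (fun s a => e2 '' delC (w0 (K := K) δ F) hW (e2.symm s) a)
      (e2 (Sum.inl ())) (e2 '' {s | ∃ l, s = Sum.inr l}) = ⋃ m, Cset (K := K) δ F m := by
    rw [nbaLang_equiv]
    ext x
    rw [langC (w0 (K := K) δ F) hW x]
    simp only [Set.mem_iUnion]
    constructor
    · rintro ⟨m, hm⟩
      exact ⟨m, fun p hp hocc => hm p hp hocc⟩
    · rintro ⟨m, hm⟩
      exact ⟨m, fun p hp hocc => hm p hp hocc⟩
  refine ⟨Fin (Fintype.card (Mst α K)), inferInstance,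
    (fun s a => e1 '' delB δ F (e1.symm s) a), e1 (minit δ F q₀), e1 '' {m | IsMain m},
    Fin (Fintype.card (WState α (w0 (K := K) δ F).length)), inferInstance,
    (fun s a => e2 '' delC (w0 (K := K) δ F) hW (e2.symm s) a), e2 (Sum.inl ()),
    e2 '' {s | ∃ l, s = Sum.inr l}, ?_, ?_, ?_⟩
  · rw [lang1]
    exact isOpen_OSet δ F q₀
  · exact ⟨Cset (K := K) δ F,
      fun n => ⟨isClosed_Cset δ F n, interior_Cset δ F n⟩, lang2⟩
  · intro x hx
    rw [lang2]
    rw [Set.mem_symmDiff, lang1] at hx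
    by_contra hnot
    simp only [Set.mem_iUnion] at hnot
    push_neg at hnot
    have hio : ∀ N, ∃ p, N ≤ p ∧ OccAt δ F x p := by
      intro N
      have h1 := hnot N
      rw [Cset, Set.mem_setOf_eq] at h1
      push_neg at h1
      obtain ⟨p, hp1, hp2⟩ := h1
      exact ⟨p, hp1, hp2⟩
    have hgen : GenericX δ F q₀ x := generic_of_io_occ δ F q₀ x hio
    rcases hx with ⟨hxL, hxO⟩ | ⟨hxO, hxL⟩
    · have hnm : ∀ n, ¬ IsMain (mrun δ F q₀ x n) := by
        intro n hn
        exact hxO ⟨n, hn⟩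
      obtain ⟨r, h0, hs, hinf⟩ := hxL
      exact partB δ F q₀ x r h0 hs hinf hnm hgen
    · obtain ⟨n, hn⟩ := hxO
      exact hxL (partA δ F q₀ x ⟨n, hn⟩ hgen)
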